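/- arXiv:2507.22162 — 4 statements merged into one kernel-verified Lean document; each statement's English description precedes it below -/
import Mathlib

section
/- Let C be the Cantor fan (the cone over the Cantor set) and L ⊆ C a Lelek fan with the same top. Then L is nowhere dense in C. -/
open Set Topology Filter

section Defs
variable {X : Type*} [TopologicalSpace X]

def IsSubcontinuum (A : Set X) : Prop := IsCompact A ∧ IsConnected A

def IsArc (A : Set X) : Prop := Nonempty (A ≃ₜ (Set.Icc (0:ℝ) 1))

def IsEndpointOfArc (A : Set X) (x : X) : Prop :=
  ∃ φ : (Set.Icc (0:ℝ) 1) ≃ₜ A, ((φ ⟨0, by norm_num⟩ : A) : X) = x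

def IsArcFromTo (A : Set X) (x y : X) : Prop :=
  (x = y ∧ A = {x}) ∨ (x ≠ y ∧ IsArc A ∧ IsEndpointOfArc A x ∧ IsEndpointOfArc A y)

def IsArcwiseConnected (K : Set X) : Prop :=
  ∀ x ∈ K, ∀ y ∈ K, x ≠ y →
    ∃ A, A ⊆ K ∧ IsArc A ∧ IsEndpointOfArc A x ∧ IsEndpointOfArc A y

def IsUnicoherent (K : Set X) : Prop :=
  ∀ A B : Set X, IsSubcontinuum A → IsSubcontinuum B → A ∪ B = K → IsConnected (A ∩ B)

def IsDendroid (K : Set X) : Prop :=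
  IsSubcontinuum K ∧ IsArcwiseConnected K ∧
    ∀ A, A ⊆ K → IsSubcontinuum A → IsUnicoherent A

def triodModel : Set (ℝ × ℝ) := (Set.Icc (-1) 1 ×ˢ ({0} : Set ℝ)) ∪ (({0} : Set ℝ) ×ˢ Set.Icc 0 1)

lemma triod_top_mem : ((0, 0) : ℝ × ℝ) ∈ triodModel := by
  left; exact ⟨by norm_num, rfl⟩

def IsSimpleTriodWithTop (T : Set X) (x : X) : Prop :=
  ∃ φ : triodModel ≃ₜ T, ((φ ⟨(0, 0), triod_top_mem⟩ : T) : X) = x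

def IsRamificationPoint (K : Set X) (x : X) : Prop :=
  x ∈ K ∧ ∃ T, T ⊆ K ∧ IsSimpleTriodWithTop T x

def IsEndpoint (K : Set X) (x : X) : Prop :=
  x ∈ K ∧ ∀ A, A ⊆ K → IsArc A → x ∈ A → IsEndpointOfArc A x

def IsFan (K : Set X) : Prop :=
  IsDendroid K ∧ ∀ x y, IsRamificationPoint K x → IsRamificationPoint K y → x = y

def IsFanWithTop (K : Set X) (v : X) : Prop := IsFan K ∧ IsRamificationPoint K v

def Legs (K : Set X) (v : X) : Set (Set X) :=
  {A | ∃ e, IsEndpoint K e ∧ A ⊆ K ∧ IsArcFromTo A v e}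

def IsRetractOf (B A : Set X) : Prop :=
  ∃ r : X → X, ContinuousOn r A ∧ Set.MapsTo r A B ∧ Set.EqOn r id B

end Defs

section MetricDefs
variable {X : Type*} [MetricSpace X]

def IsSmoothFan (K : Set X) (v : X) : Prop :=
  IsFanWithTop K v ∧
  ∀ x ∈ K, ∀ xs : ℕ → X, (∀ n, xs n ∈ K) → Tendsto xs atTop (nhds x) →
    ∀ A : Set X, A ⊆ K → IsArcFromTo A v x →
    ∀ As : ℕ → Set X, (∀ n, As n ⊆ K ∧ IsArcFromTo (As n) v (xs n)) →
      Tendsto (fun n => Metric.hausdorffDist (As n) A) atTop (nhds 0)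

def IsLelekFan (K : Set X) (v : X) : Prop :=
  IsSmoothFan K v ∧ K ⊆ closure {x | IsEndpoint K x}

def IsWedge (L : Set X) (v : X) (W : Set X) : Prop :=
  W ⊆ L ∧ IsSubcontinuum W ∧ IsLelekFan W v ∧ IsLelekFan ((L \ W) ∪ {v}) v

end MetricDefs

def coneSetoid (Z : Type*) : Setoid (Z × Set.Icc (0:ℝ) 1) where
  r a b := a = b ∨ ((a.2 : ℝ) = 0 ∧ (b.2 : ℝ) = 0)
  iseqv := by
    refine ⟨fun a => Or.inl rfl, ?_, ?_⟩
    · rintro a b (rfl | h)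
      · exact Or.inl rfl
      · exact Or.inr ⟨h.2, h.1⟩
    · rintro a b c (rfl | h) (rfl | h')
      · exact Or.inl rfl
      · exact Or.inr h'
      · exact Or.inr h
      · exact Or.inr ⟨h.1, h'.2⟩

abbrev CantorFanSpace : Type := Quotient (coneSetoid (ℕ → Bool))

def IsCantorFan {X : Type*} [TopologicalSpace X] (K : Set X) (v : X) : Prop :=
  IsFanWithTop K v ∧ Nonempty (K ≃ₜ CantorFanSpace)

def IsConfluent {X Y : Type*} [TopologicalSpace X] [TopologicalSpace Y] (f : X → Y) : Prop :=
  ∀ Q : Set Y, Q ⊆ Set.range f → IsCompact Q → IsConnected Q →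
    ∀ x ∈ f ⁻¹' Q, f '' connectedComponentIn (f ⁻¹' Q) x = Q


noncomputable section AuxStmt4

/-- A self-homeomorphism of `[0,1]` cannot send `0` to an interior point. -/
lemma aux_homeo_zero_ne_interior (H : (Set.Icc (0:ℝ) 1) ≃ₜ (Set.Icc (0:ℝ) 1))
    (u : Set.Icc (0:ℝ) 1) (h0 : 0 < (u:ℝ)) (h1 : (u:ℝ) < 1) :
    H ⟨0, by norm_num⟩ ≠ u := by
  intro hH
  set z : Set.Icc (0:ℝ) 1 := ⟨0, by norm_num⟩ with hz
  have hval : Subtype.val '' ({z}ᶜ : Set (Set.Icc (0:ℝ) 1)) = Set.Ioc (0:ℝ) 1 := by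
    ext r
    constructor
    · rintro ⟨⟨a, ha⟩, hne, rfl⟩
      exact ⟨lt_of_le_of_ne ha.1 (fun h => hne (Subtype.ext h.symm)), ha.2⟩
    · rintro ⟨hr0, hr1⟩
      exact ⟨⟨r, le_of_lt hr0, hr1⟩, by simp [hz, Subtype.ext_iff, ne_of_gt hr0], rfl⟩
  have hpre : IsPreconnected ({z}ᶜ : Set (Set.Icc (0:ℝ) 1)) := by
    rw [← IsInducing.subtypeVal.isPreconnected_image, hval]
    exact isPreconnected_Ioc
  have himg : IsPreconnected (Subtype.val '' (H '' ({z}ᶜ : Set (Set.Icc (0:ℝ) 1)))) :=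
    (hpre.image _ H.continuous.continuousOn).image _ continuous_subtype_val.continuousOn
  have hHimg : H '' ({z}ᶜ : Set (Set.Icc (0:ℝ) 1)) = ({u}ᶜ : Set (Set.Icc (0:ℝ) 1)) := by
    ext a
    simp only [Set.mem_image, Set.mem_compl_iff, Set.mem_singleton_iff]
    constructor
    · rintro ⟨b, hb, rfl⟩
      intro h
      exact hb (H.injective (h.trans hH.symm))
    · intro ha
      refine ⟨H.symm a, ?_, H.apply_symm_apply a⟩
      intro h
      exact ha (by rw [← hH, ← h, H.apply_symm_apply])
  rw [hHimg] at himg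
  have h0mem : (0:ℝ) ∈ Subtype.val '' ({u}ᶜ : Set (Set.Icc (0:ℝ) 1)) :=
    ⟨⟨0, by norm_num⟩, by simp [Subtype.ext_iff, ne_of_lt h0], rfl⟩
  have h1mem : (1:ℝ) ∈ Subtype.val '' ({u}ᶜ : Set (Set.Icc (0:ℝ) 1)) :=
    ⟨⟨1, by norm_num⟩, by simp [Subtype.ext_iff, ne_of_gt h1], rfl⟩
  have := himg.Icc_subset h0mem h1mem ⟨le_of_lt h0, le_of_lt h1⟩
  obtain ⟨a, hane, hav⟩ := this
  exact hane (Subtype.ext hav)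

/-- A continuous injection of the Cantor fan space into a Hausdorff space. -/
def cfsEmbedFun : ((ℕ → Bool) × Set.Icc (0:ℝ) 1) → ℝ × (ℕ → ℝ) :=
  fun p => ((p.2 : ℝ), fun n => (p.2 : ℝ) * (if p.1 n then 1 else 0))

lemma cfsEmbedFun_resp : ∀ a b : ((ℕ → Bool) × Set.Icc (0:ℝ) 1),
    (coneSetoid (ℕ → Bool)).r a b → cfsEmbedFun a = cfsEmbedFun b := by
  rintro a b (rfl | ⟨ha, hb⟩)
  · rfl
  · simp [cfsEmbedFun, ha, hb]

def cfsEmbed : CantorFanSpace → ℝ × (ℕ → ℝ) :=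
  Quotient.lift cfsEmbedFun cfsEmbedFun_resp

lemma cfsEmbedFun_continuous : Continuous cfsEmbedFun := by
  refine Continuous.prodMk (continuous_subtype_val.comp continuous_snd) ?_
  refine continuous_pi fun n => Continuous.mul (continuous_subtype_val.comp continuous_snd) ?_
  exact (continuous_of_discreteTopology (f := fun b : Bool => if b then (1:ℝ) else 0)).comp
    ((continuous_apply n).comp continuous_fst)

lemma cfsEmbed_continuous : Continuous cfsEmbed :=
  cfsEmbedFun_continuous.quotient_lift _

lemma cfsEmbed_injective : Function.Injective cfsEmbed := by
  intro x y
  induction' x using Quotient.ind with a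
  induction' y using Quotient.ind with b
  intro h
  have h1 : (a.2 : ℝ) = (b.2 : ℝ) := congrArg Prod.fst h
  by_cases h0 : (a.2 : ℝ) = 0
  · exact Quotient.sound (Or.inr ⟨h0, by rw [← h1]; exact h0⟩)
  · have h2 : ∀ n, (a.2 : ℝ) * (if a.1 n then 1 else 0) = (b.2 : ℝ) * (if b.1 n then 1 else 0) :=
      fun n => congrFun (congrArg Prod.snd h) n
    have hfst : a.1 = b.1 := by
      funext n
      have := h2 n
      rw [← h1] at this
      have := mul_left_cancel₀ h0 this
      cases ha : a.1 n <;> cases hb : b.1 n <;> simp_all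
    have : a = b := Prod.ext hfst (Subtype.ext h1)
    rw [this]

instance : T2Space CantorFanSpace :=
  T2Space.of_injective_continuous cfsEmbed_injective cfsEmbed_continuous

end AuxStmt4

/-- a Lelek fan `L` contained in a Cantor fan `C` (same top `v`)
is nowhere dense in `C`. -/
theorem stmt4 {X : Type*} [MetricSpace X] (C L : Set X) (v : X)
    (hC : IsCantorFan C v) (hL : IsLelekFan L v) (hsub : L ⊆ C) :
    IsNowhereDense ((Subtype.val ⁻¹' L : Set C)) := by
  obtain ⟨e⟩ := hC.2
  have hLcomp : IsCompact L := hL.1.1.1.1.1.1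
  have hclos : closure (Subtype.val ⁻¹' L : Set C) = Subtype.val ⁻¹' L :=
    (hLcomp.isClosed.preimage continuous_subtype_val).closure_eq
  unfold IsNowhereDense
  rw [hclos, Set.eq_empty_iff_forall_notMem]
  intro x hx
  obtain ⟨V, hVopen, hVeq⟩ :=
    isOpen_induced_iff.mp (isOpen_interior (s := (Subtype.val ⁻¹' L : Set C)))
  have hsubV : (Subtype.val ⁻¹' V : Set C) ⊆ Subtype.val ⁻¹' L := by
    rw [hVeq]; exact interior_subset
  have hxV : x ∈ (Subtype.val ⁻¹' V : Set C) := by rw [hVeq]; exact hx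
  set q : ((ℕ → Bool) × Set.Icc (0:ℝ) 1) → CantorFanSpace :=
    Quotient.mk (coneSetoid (ℕ → Bool)) with hqdef
  have hq : IsQuotientMap q := isQuotientMap_quot_mk
  have hqcont : Continuous q := hq.continuous
  set U : Set CantorFanSpace := e '' (Subtype.val ⁻¹' V) with hUdef
  have hUopen : IsOpen U := e.isOpenMap _ (hVopen.preimage continuous_subtype_val)
  have hUsubL : e ⁻¹' U ⊆ (Subtype.val ⁻¹' L : Set C) := by
    intro c hc
    obtain ⟨c', hc', hcc⟩ := hc
    exact hsubV (e.injective hcc ▸ hc')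
  obtain ⟨⟨s, t⟩, hst⟩ : ∃ p, q p ∈ U := by
    obtain ⟨a, ha⟩ := Quotient.exists_rep (e x)
    exact ⟨a, by rw [show q a = e x from ha]; exact Set.mem_image_of_mem _ hxV⟩
  have hOopen : IsOpen {u : Set.Icc (0:ℝ) 1 | q (s, u) ∈ U} :=
    IsOpen.preimage (Continuous.prodMk_right s) (hUopen.preimage hqcont)
  obtain ⟨Or, hOropen, hOreq⟩ := isOpen_induced_iff.mp hOopen
  have htOr : t ∈ (Subtype.val ⁻¹' Or : Set (Set.Icc (0:ℝ) 1)) := by rw [hOreq]; exact hst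
  have htcl : (t : ℝ) ∈ closure (Set.Ioo (0:ℝ) 1) := by
    rw [closure_Ioo (by norm_num : (0:ℝ) ≠ 1)]; exact t.2
  obtain ⟨y, hyOr, hyIoo⟩ := _root_.mem_closure_iff.mp htcl Or hOropen htOr
  set t' : Set.Icc (0:ℝ) 1 := ⟨y, le_of_lt hyIoo.1, le_of_lt hyIoo.2⟩ with ht'def
  have ht'U : (s, t') ∈ q ⁻¹' U := by
    have h1 : t' ∈ (Subtype.val ⁻¹' Or : Set (Set.Icc (0:ℝ) 1)) := hyOr
    rw [hOreq] at h1
    exact h1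
  obtain ⟨Vs, VI, hVsopen, hVIopen, hsVs, ht'VI, hboxsub⟩ :=
    isOpen_prod_iff.mp (hUopen.preimage hqcont) s t' ht'U
  obtain ⟨VIr, hVIropen, hVIreq⟩ := isOpen_induced_iff.mp hVIopen
  have hyVIr : y ∈ VIr := by
    have h1 : t' ∈ (Subtype.val ⁻¹' VIr : Set (Set.Icc (0:ℝ) 1)) := by rw [hVIreq]; exact ht'VI
    exact h1
  obtain ⟨ε, hεpos, hball⟩ := Metric.isOpen_iff.mp hVIropen y hyVIr
  set δ := min (ε/2) (min (y/2) ((1-y)/2)) with hδdef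
  have hδpos : 0 < δ := by
    refine lt_min (by linarith) (lt_min (by linarith [hyIoo.1]) (by linarith [hyIoo.2]))
  have hδa : δ ≤ ε/2 := min_le_left _ _
  have hδb : δ ≤ y/2 := le_trans (min_le_right _ _) (min_le_left _ _)
  have hδc : δ ≤ (1-y)/2 := le_trans (min_le_right _ _) (min_le_right _ _)
  set α := y - δ with hαdef
  set β := y + δ with hβdef
  have hα0 : 0 < α := by simp only [hαdef]; linarith [hyIoo.1]
  have hβ1 : β < 1 := by simp only [hβdef]; linarith [hyIoo.2]
  have hαβ : Set.Ioo α β ⊆ VIr := by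
    intro r hr
    apply hball
    rw [Metric.mem_ball, Real.dist_eq, abs_lt]
    obtain ⟨hr1, hr2⟩ := hr
    constructor <;> [skip; skip] <;> simp only [hαdef, hβdef] at hr1 hr2 <;> linarith
  set Bo : Set ((ℕ → Bool) × Set.Icc (0:ℝ) 1) :=
    Vs ×ˢ (Subtype.val ⁻¹' Set.Ioo α β) with hBodef
  have hBosub : Bo ⊆ q ⁻¹' U := by
    rintro ⟨a1, a2⟩ ⟨h1, h2⟩
    refine hboxsub ⟨h1, ?_⟩
    rw [← hVIreq]
    exact hαβ h2
  have hBoopen : IsOpen Bo := hVsopen.prod (isOpen_Ioo.preimage continuous_subtype_val)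
  have hBosat : q ⁻¹' (q '' Bo) = Bo := by
    apply Set.Subset.antisymm
    · rintro p hp
      obtain ⟨p', hp', hqq⟩ := hp
      obtain (rfl | ⟨h1, h2⟩) := Quotient.exact hqq
      · exact hp'
      · exact absurd h1 (ne_of_gt (lt_trans hα0 hp'.2.1))
    · exact Set.subset_preimage_image q Bo
  have hQBo : IsOpen (q '' Bo) := by
    rw [← hq.isOpen_preimage, hBosat]; exact hBoopen
  set W0 : Set C := e ⁻¹' (q '' Bo) with hW0def
  have hW0open : IsOpen W0 := hQBo.preimage e.continuous
  have hW0sub : W0 ⊆ Subtype.val ⁻¹' L := by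
    intro c hc
    refine hUsubL ?_
    obtain ⟨p', hp', hqq⟩ := hc
    exact Set.mem_preimage.mpr (hqq ▸ (hBosub hp'))
  have hst'Bo : (s, t') ∈ Bo := by
    refine ⟨hsVs, ?_, ?_⟩ <;> simp only [ht'def, hαdef, hβdef] <;> linarith
  have hpW0 : e.symm (q (s, t')) ∈ W0 := by
    show e (e.symm (q (s, t'))) ∈ q '' Bo
    rw [e.apply_symm_apply]
    exact Set.mem_image_of_mem q hst'Bo
  have hpL : ((e.symm (q (s, t'))) : X) ∈ L := hW0sub hpW0
  obtain ⟨Vw, hVwopen, hVweq⟩ := isOpen_induced_iff.mp hW0open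
  have hpVw : ((e.symm (q (s, t'))) : X) ∈ Vw := by
    have h1 : e.symm (q (s, t')) ∈ (Subtype.val ⁻¹' Vw : Set C) := by rw [hVweq]; exact hpW0
    exact h1
  obtain ⟨xe, hxeVw, hxeE⟩ := _root_.mem_closure_iff.mp (hL.2 hpL) Vw hVwopen hpVw
  have hxeL : xe ∈ L := hxeE.1
  have hxeC : xe ∈ C := hsub hxeL
  have hceW0 : (⟨xe, hxeC⟩ : C) ∈ W0 := by
    have h1 : (⟨xe, hxeC⟩ : C) ∈ (Subtype.val ⁻¹' Vw : Set C) := hxeVw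
    rw [hVweq] at h1
    exact h1
  obtain ⟨⟨s₀, t₀⟩, hB₀, hq₀⟩ := hceW0
  have ht₀ : (t₀ : ℝ) ∈ Set.Ioo α β := hB₀.2
  set α' := (α + (t₀:ℝ))/2 with hα'def
  set β' := ((t₀:ℝ) + β)/2 with hβ'def
  have hαα' : α < α' := by simp only [hα'def]; linarith [ht₀.1]
  have hα't₀ : α' < t₀ := by simp only [hα'def]; linarith [ht₀.1]
  have ht₀β' : (t₀:ℝ) < β' := by simp only [hβ'def]; linarith [ht₀.2]
  have hβ'β : β' < β := by simp only [hβ'def]; linarith [ht₀.2]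
  have hα'0 : 0 < α' := lt_trans hα0 hαα'
  have hβ'1 : β' < 1 := lt_trans hβ'β hβ1
  have hd : 0 < β' - α' := by linarith
  have hmem : ∀ u : Set.Icc (0:ℝ) 1, α' + (u:ℝ) * (β' - α') ∈ Set.Icc (0:ℝ) 1 := by
    intro u
    obtain ⟨hu0, hu1⟩ := u.2
    constructor <;> nlinarith
  have hjIoo : ∀ u : Set.Icc (0:ℝ) 1, α' + (u:ℝ) * (β' - α') ∈ Set.Ioo α β := by
    intro u
    obtain ⟨hu0, hu1⟩ := u.2
    constructor <;> nlinarith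
  set Φ : Set.Icc (0:ℝ) 1 → X :=
    fun u => ((e.symm (q (s₀, ⟨α' + (u:ℝ) * (β' - α'), hmem u⟩))) : X) with hΦdef
  have hΦW0 : ∀ u : Set.Icc (0:ℝ) 1,
      e.symm (q (s₀, ⟨α' + (u:ℝ) * (β' - α'), hmem u⟩)) ∈ W0 := by
    intro u
    show e (e.symm _) ∈ q '' Bo
    rw [e.apply_symm_apply]
    exact Set.mem_image_of_mem q ⟨hB₀.1, hjIoo u⟩
  have hΦL : ∀ u, Φ u ∈ L := fun u => hW0sub (hΦW0 u)
  have hΦcont : Continuous Φ := by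
    apply continuous_subtype_val.comp
    apply e.symm.continuous.comp
    apply hqcont.comp
    exact (Continuous.prodMk_right s₀).comp
      (Continuous.subtype_mk (continuous_const.add (continuous_subtype_val.mul continuous_const)) _)
  have hΦinj : Function.Injective Φ := by
    intro u v huv
    have h1 : e.symm (q (s₀, ⟨α' + (u:ℝ) * (β' - α'), hmem u⟩)) =
        e.symm (q (s₀, ⟨α' + (v:ℝ) * (β' - α'), hmem v⟩)) := Subtype.ext huv
    have h2 := e.symm.injective h1
    obtain (heq | ⟨h3, h4⟩) := Quotient.exact h2
    · have h5 : α' + (u:ℝ) * (β' - α') = α' + (v:ℝ) * (β' - α') :=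
        congrArg (fun p => ((p.2 : ℝ)) ) heq
      exact Subtype.ext (mul_right_cancel₀ (ne_of_gt hd) (by linarith))
    · exact absurd h3 (ne_of_gt (lt_trans hα0 (hjIoo u).1))
  haveI : CompactSpace (Set.Icc (0:ℝ) 1) := isCompact_iff_compactSpace.mp isCompact_Icc
  have hemb : Topology.IsClosedEmbedding Φ := hΦcont.isClosedEmbedding hΦinj
  set HΦ : (Set.Icc (0:ℝ) 1) ≃ₜ Set.range Φ := hemb.toIsEmbedding.toHomeomorph with hHΦdef
  have hAL : Set.range Φ ⊆ L := by rintro _ ⟨u, rfl⟩; exact hΦL u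
  have hArc : IsArc (Set.range Φ) := ⟨HΦ.symm⟩
  have hu₀mem : ((t₀:ℝ) - α')/(β' - α') ∈ Set.Icc (0:ℝ) 1 :=
    ⟨div_nonneg (by linarith) (le_of_lt hd), (div_le_one hd).mpr (by linarith)⟩
  set u₀ : Set.Icc (0:ℝ) 1 := ⟨((t₀:ℝ) - α')/(β' - α'), hu₀mem⟩ with hu₀def
  have hΦu₀ : Φ u₀ = xe := by
    have hj : (⟨α' + (u₀:ℝ) * (β' - α'), hmem u₀⟩ : Set.Icc (0:ℝ) 1) = t₀ := by
      apply Subtype.ext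
      show α' + (((t₀:ℝ) - α')/(β' - α')) * (β' - α') = (t₀:ℝ)
      field_simp
      ring
    show ((e.symm (q (s₀, ⟨α' + (u₀:ℝ) * (β' - α'), hmem u₀⟩))) : X) = xe
    rw [hj, hq₀, e.symm_apply_apply]
  obtain ⟨χ, hχ⟩ := hxeE.2 (Set.range Φ) hAL hArc ⟨u₀, hΦu₀⟩
  have hval : ∀ w, ((HΦ w : Set.range Φ) : X) = Φ w := fun w => rfl
  have hfin := aux_homeo_zero_ne_interior (χ.trans HΦ.symm) u₀
    (div_pos (by linarith) hd) ((div_lt_one hd).mpr (by linarith))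
  apply hfin
  apply hΦinj
  calc Φ ((χ.trans HΦ.symm) ⟨0, by norm_num⟩)
      = ((HΦ (HΦ.symm (χ ⟨0, by norm_num⟩))) : X) := (hval _).symm
    _ = ((χ ⟨0, by norm_num⟩ : Set.range Φ) : X) :=
        congrArg Subtype.val (HΦ.apply_symm_apply _)
    _ = xe := hχ
    _ = Φ u₀ := hΦu₀.symm
end

section
/- Let L be a Lelek fan and C ⊆ L a Cantor fan with the same top. Then C is nowhere dense in L. -/
open Set Topology Filter

namespace Stmt5Aux

abbrev I01 : Set ℝ := Set.Icc (0:ℝ) 1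

def cmk (p : (ℕ → Bool) × I01) : CantorFanSpace := Quotient.mk (coneSetoid (ℕ → Bool)) p

lemma continuous_cmk : Continuous cmk := continuous_quot_mk

lemma cmk_eq_iff {a b : (ℕ → Bool) × I01} :
    cmk a = cmk b ↔ (a = b ∨ ((a.2 : ℝ) = 0 ∧ (b.2 : ℝ) = 0)) := by
  constructor
  · intro h; exact Quotient.eq.mp h
  · intro h; exact Quotient.sound h

lemma cmk_surj (q : CantorFanSpace) : ∃ p, cmk p = q := Quot.exists_rep q

noncomputable def pr : ℝ → I01 := Set.projIcc 0 1 zero_le_one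

lemma pr_of_mem {r : ℝ} (hr : r ∈ I01) : pr r = ⟨r, hr⟩ := Set.projIcc_of_mem _ hr

lemma continuous_pr : Continuous pr := continuous_projIcc

/-- the set of "endpoints" (top) of the Cantor fan model -/
def DD : Set CantorFanSpace := Set.range (fun z : ℕ → Bool => cmk (z, ⟨1, by norm_num⟩))

lemma leg_embedding (hT2 : T2Space CantorFanSpace) (z : ℕ → Bool) :
    Topology.IsEmbedding (fun s : I01 => cmk (z, s)) := by
  haveI := hT2
  have hc : Continuous (fun s : I01 => cmk (z, s)) :=
    continuous_cmk.comp (continuous_const.prodMk continuous_id)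
  have hinj : Function.Injective (fun s : I01 => cmk (z, s)) := by
    intro s s' h
    rcases cmk_eq_iff.mp h with h | ⟨h1, h2⟩
    · exact (Prod.ext_iff.mp h).2
    · exact Subtype.ext (h1.trans h2.symm)
  exact (hc.isClosedEmbedding hinj).isEmbedding

noncomputable def vleg : I01 → CantorFanSpace := fun s =>
  if (s : ℝ) ≤ 1/2 then cmk (fun _ => false, pr (1 - 2*(s:ℝ)))
  else cmk (fun _ => true, pr (2*(s:ℝ) - 1))

lemma pr_zero : ((pr 0 : I01) : ℝ) = 0 := by
  rw [pr_of_mem (by constructor <;> norm_num)]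

lemma vleg_embedding (hT2 : T2Space CantorFanSpace) : Topology.IsEmbedding vleg := by
  haveI := hT2
  have hf : Continuous (fun s : I01 => cmk (fun _ => false, pr (1 - 2*(s:ℝ)))) :=
    continuous_cmk.comp (continuous_const.prodMk (continuous_pr.comp (by continuity)))
  have hg : Continuous (fun s : I01 => cmk (fun _ => true, pr (2*(s:ℝ) - 1))) :=
    continuous_cmk.comp (continuous_const.prodMk (continuous_pr.comp (by continuity)))
  have hc : Continuous vleg := by
    apply Continuous.if_le hf hg continuous_subtype_val continuous_const
    intro s hs
    have e1 : (1 : ℝ) - 2*(s:ℝ) = 0 := by rw [hs]; ring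
    have e2 : (2 : ℝ)*(s:ℝ) - 1 = 0 := by rw [hs]; ring
    rw [e1, e2]
    exact Quotient.sound (Or.inr ⟨pr_zero, pr_zero⟩)
  have hinj : Function.Injective vleg := by
    intro s s' h
    have hmem1 : ∀ x : I01, (x : ℝ) ≤ 1/2 → (1 - 2*(x:ℝ)) ∈ I01 := by
      rintro x hx
      constructor
      · linarith
      · have := x.2.1; linarith
    have hmem2 : ∀ x : I01, ¬((x : ℝ) ≤ 1/2) → (2*(x:ℝ) - 1) ∈ I01 := by
      rintro x hx
      push_neg at hx
      constructor
      · linarith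
      · have := x.2.2; linarith
    unfold vleg at h
    by_cases hs : (s : ℝ) ≤ 1/2 <;> by_cases hs' : (s' : ℝ) ≤ 1/2 <;>
      simp only [hs, hs', if_true, if_false, if_pos, if_neg, not_false_iff] at h
    · rcases cmk_eq_iff.mp h with h | ⟨h1, h2⟩
      · have := (Prod.ext_iff.mp h).2
        rw [pr_of_mem (hmem1 s hs), pr_of_mem (hmem1 s' hs')] at this
        have := congrArg Subtype.val this
        simp only at this
        exact Subtype.ext (by linarith)
      · rw [pr_of_mem (hmem1 s hs)] at h1
        rw [pr_of_mem (hmem1 s' hs')] at h2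
        simp only at h1 h2
        exact Subtype.ext (by linarith)
    · rcases cmk_eq_iff.mp h with h | ⟨h1, h2⟩
      · exfalso
        have := congrFun (Prod.ext_iff.mp h).1 0
        simp at this
      · exfalso
        rw [pr_of_mem (hmem2 s' hs')] at h2
        simp only at h2
        push_neg at hs'
        have : (s' : ℝ) = 1/2 := by linarith
        exact absurd this (ne_of_gt hs')
    · rcases cmk_eq_iff.mp h with h | ⟨h1, h2⟩
      · exfalso
        have := congrFun (Prod.ext_iff.mp h).1 0
        simp at this
      · exfalso
        rw [pr_of_mem (hmem2 s hs)] at h1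
        simp only at h1
        push_neg at hs
        have : (s : ℝ) = 1/2 := by linarith
        exact absurd this (ne_of_gt hs)
    · rcases cmk_eq_iff.mp h with h | ⟨h1, h2⟩
      · have := (Prod.ext_iff.mp h).2
        rw [pr_of_mem (hmem2 s hs), pr_of_mem (hmem2 s' hs')] at this
        have := congrArg Subtype.val this
        simp only at this
        exact Subtype.ext (by linarith)
      · rw [pr_of_mem (hmem2 s hs)] at h1
        rw [pr_of_mem (hmem2 s' hs')] at h2
        simp only at h1 h2
        exact Subtype.ext (by linarith)
  exact (hc.isClosedEmbedding hinj).isEmbedding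

lemma exists_arc_through (hT2 : T2Space CantorFanSpace) (q : CantorFanSpace) (hq : q ∉ DD) :
    ∃ (u : I01 → CantorFanSpace) (t0 : I01),
      Topology.IsEmbedding u ∧ u t0 = q ∧ (t0 : ℝ) ≠ 0 ∧ (t0 : ℝ) ≠ 1 := by
  obtain ⟨⟨z, t⟩, hp⟩ := cmk_surj q
  have ht1 : (t : ℝ) ≠ 1 := by
    intro h
    apply hq
    rw [← hp]
    have ht : t = ⟨1, by norm_num⟩ := Subtype.ext h
    rw [ht]
    exact ⟨z, rfl⟩
  by_cases ht0 : (t : ℝ) = 0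
  · -- vertex case
    refine ⟨vleg, ⟨1/2, by constructor <;> norm_num⟩, vleg_embedding hT2, ?_, by norm_num, by norm_num⟩
    unfold vleg
    rw [if_pos (by norm_num)]
    rw [← hp]
    apply Quotient.sound
    right
    constructor
    · show ((pr (1 - 2*((⟨1/2, by constructor <;> norm_num⟩ : I01) : ℝ)) : I01) : ℝ) = 0
      have e : (1 : ℝ) - 2*((⟨1/2, by constructor <;> norm_num⟩ : I01) : ℝ) = 0 := by norm_num
      rw [e]
      exact pr_zero
    · exact ht0
  · exact ⟨fun s => cmk (z, s), t, leg_embedding hT2 z, hp, ht0, ht1⟩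


/-- An interior point of an (embedded) arc is not an endpoint of that arc. -/
lemma interior_not_endpoint {Y : Type*} [TopologicalSpace Y] {u : I01 → Y}
    (hu : Topology.IsEmbedding u) {t0 : I01} (h0 : (t0 : ℝ) ≠ 0) (h1 : (t0 : ℝ) ≠ 1) :
    ¬ IsEndpointOfArc (Set.range u) (u t0) := by
  rintro ⟨ψ, hψ⟩
  -- the complement of the point in the arc
  set s : Set Y := Set.range u \ {u t0} with hs
  -- s is preconnected
  have hs_pre : IsPreconnected s := by
    have hf : Continuous fun r : ℝ => ((ψ (pr r) : Set.range u) : Y) :=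
      continuous_subtype_val.comp (ψ.continuous.comp continuous_pr)
    have himg : (fun r : ℝ => ((ψ (pr r) : Set.range u) : Y)) '' (Set.Ioc 0 1) = s := by
      ext y
      constructor
      · rintro ⟨r, hr, rfl⟩
        have hrI : r ∈ I01 := ⟨le_of_lt hr.1, hr.2⟩
        refine ⟨(ψ (pr r)).2, ?_⟩
        simp only [Set.mem_singleton_iff]
        intro hy
        have : ((ψ (pr r) : Set.range u) : Y) = ((ψ ⟨0, by norm_num⟩ : Set.range u) : Y) := by
          rw [hψ]; exact hy
        have h2 : ψ (pr r) = ψ ⟨0, by norm_num⟩ := Subtype.ext this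
        have h3 : pr r = ⟨0, by norm_num⟩ := ψ.injective h2
        rw [pr_of_mem hrI] at h3
        exact absurd (congrArg Subtype.val h3) (ne_of_gt hr.1)
      · rintro ⟨hyr, hyne⟩
        obtain ⟨x, hx⟩ := ψ.surjective ⟨y, hyr⟩
        refine ⟨(x : ℝ), ⟨?_, x.2.2⟩, ?_⟩
        swap
        · show ((ψ (pr (x:ℝ)) : Set.range u) : Y) = y
          rw [pr_of_mem x.2, Subtype.coe_eta, hx]
        rcases lt_or_eq_of_le x.2.1 with h | h
        · exact h
        · exfalso
          apply hyne
          have : x = ⟨0, by norm_num⟩ := Subtype.ext h.symm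
          rw [this] at hx
          have := congrArg (Subtype.val) hx
          simp only at this
          rw [← this, hψ]
          rfl
    rw [← himg]
    exact isPreconnected_Ioc.image _ hf.continuousOn
  -- two open sets disconnecting s
  have hopen1 : IsOpen {x : I01 | (x : ℝ) < (t0 : ℝ)} :=
    isOpen_Iio.preimage continuous_subtype_val
  have hopen2 : IsOpen {x : I01 | (t0 : ℝ) < (x : ℝ)} :=
    isOpen_Ioi.preimage continuous_subtype_val
  obtain ⟨W1, hW1o, hW1⟩ := (hu.isInducing.isOpen_iff).mp hopen1
  obtain ⟨W2, hW2o, hW2⟩ := (hu.isInducing.isOpen_iff).mp hopen2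
  have himg1 : u '' {x : I01 | (x : ℝ) < (t0 : ℝ)} = W1 ∩ Set.range u := by
    rw [← hW1]; exact Set.image_preimage_eq_inter_range
  have himg2 : u '' {x : I01 | (t0 : ℝ) < (x : ℝ)} = W2 ∩ Set.range u := by
    rw [← hW2]; exact Set.image_preimage_eq_inter_range
  have h0' : (0:ℝ) < (t0 : ℝ) := lt_of_le_of_ne t0.2.1 (Ne.symm h0)
  have h1' : (t0 : ℝ) < 1 := lt_of_le_of_ne t0.2.2 h1
  have key := hs_pre W1 W2 hW1o hW2o ?_ ?_ ?_
  · obtain ⟨y, ⟨⟨⟨x, rfl⟩, hyne⟩, hy1, hy2⟩⟩ := key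
    have hx1 : u x ∈ W1 ∩ Set.range u := ⟨hy1, ⟨x, rfl⟩⟩
    have hx2 : u x ∈ W2 ∩ Set.range u := ⟨hy2, ⟨x, rfl⟩⟩
    rw [← himg1] at hx1
    rw [← himg2] at hx2
    obtain ⟨x1, hx1lt, hx1e⟩ := hx1
    obtain ⟨x2, hx2lt, hx2e⟩ := hx2
    rw [hu.injective hx1e] at hx1lt
    rw [hu.injective hx2e] at hx2lt
    exact absurd ((show (t0:ℝ) < x from hx2lt).trans (show (x:ℝ) < t0 from hx1lt)) (lt_irrefl _)
  · -- s ⊆ W1 ∪ W2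
    rintro y ⟨⟨x, rfl⟩, hyne⟩
    have hxne : x ≠ t0 := fun h => hyne (by rw [h]; rfl)
    rcases lt_or_gt_of_ne (fun h : (x:ℝ) = (t0:ℝ) => hxne (Subtype.ext h)) with h | h
    · left; exact (himg1 ▸ ⟨x, h, rfl⟩ : u x ∈ W1 ∩ Set.range u).1
    · right; exact (himg2 ▸ ⟨x, h, rfl⟩ : u x ∈ W2 ∩ Set.range u).1
  · -- s ∩ W1 nonempty
    refine ⟨u ⟨0, by norm_num⟩, ⟨⟨_, rfl⟩, ?_⟩, ?_⟩
    · simp only [Set.mem_singleton_iff]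
      intro h
      have := congrArg Subtype.val (hu.injective h)
      simp only at this
      exact h0 this.symm
    · exact (himg1 ▸ ⟨⟨0, by norm_num⟩, h0', rfl⟩ : u _ ∈ W1 ∩ Set.range u).1
  · -- s ∩ W2 nonempty
    refine ⟨u ⟨1, by norm_num⟩, ⟨⟨_, rfl⟩, ?_⟩, ?_⟩
    · simp only [Set.mem_singleton_iff]
      intro h
      have := congrArg Subtype.val (hu.injective h)
      simp only at this
      exact h1 this.symm
    · exact (himg2 ▸ ⟨⟨1, by norm_num⟩, h1', rfl⟩ : u _ ∈ W2 ∩ Set.range u).1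


noncomputable def Fn (n : ℕ) : CantorFanSpace → ℝ :=
  Quotient.lift (fun p : (ℕ → Bool) × I01 => (p.2 : ℝ) * (if p.1 n then 1 else 0))
    (by
      rintro a b (rfl | ⟨h1, h2⟩)
      · rfl
      · simp [h1, h2])

lemma continuous_Fn (n : ℕ) : Continuous (Fn n) := by
  apply Continuous.quotient_lift
  exact (continuous_subtype_val.comp continuous_snd).mul
    (((continuous_of_discreteTopology (f := fun b : Bool => if b then (1:ℝ) else 0))).comp
      ((continuous_apply n).comp continuous_fst))

lemma Fn_cmk (n : ℕ) (p : (ℕ → Bool) × I01) :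
    Fn n (cmk p) = (p.2 : ℝ) * (if p.1 n then 1 else 0) := rfl

end Stmt5Aux

open Stmt5Aux in
/-- endpoints of `C` are sent into the top set `DD` of the Cantor fan model. -/
lemma endpoint_mem_DD {X : Type*} [MetricSpace X] {C : Set X} (h : ↥C ≃ₜ CantorFanSpace)
    {e : X} (heC : e ∈ C) (he : IsEndpoint C e) : h ⟨e, heC⟩ ∈ DD := by
  have hT2 : T2Space CantorFanSpace := h.symm.isEmbedding.t2Space
  by_contra hq
  obtain ⟨u, t0, hu, hut0, ht0, ht1⟩ := exists_arc_through hT2 _ hq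
  set A' : Set CantorFanSpace := Set.range u with hA'
  set A : Set X := Subtype.val '' (⇑h ⁻¹' A') with hA
  have hAC : A ⊆ C := by
    rintro x ⟨c, _, rfl⟩
    exact c.2
  have hmem : ∀ x (hx : x ∈ A), (h ⟨x, hAC hx⟩ : CantorFanSpace) ∈ A' := by
    rintro x ⟨c, hc, rfl⟩
    have hcc : (⟨(c : X), hAC ⟨c, hc, rfl⟩⟩ : ↥C) = c := Subtype.ext rfl
    rw [hcc]
    exact hc
  let χ : ↥A ≃ₜ ↥A' :=
    { toFun := fun x => ⟨h ⟨x.1, hAC x.2⟩, hmem x.1 x.2⟩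
      invFun := fun y => ⟨((h.symm y.1 : ↥C) : X),
        ⟨h.symm y.1, by simp only [Set.mem_preimage, Homeomorph.apply_symm_apply]; exact y.2, rfl⟩⟩
      left_inv := by
        intro x
        apply Subtype.ext
        show ((h.symm (h ⟨x.1, hAC x.2⟩) : ↥C) : X) = x.1
        rw [Homeomorph.symm_apply_apply]
      right_inv := by
        intro y
        apply Subtype.ext
        show (h ⟨((h.symm y.1 : ↥C) : X), _⟩ : CantorFanSpace) = y.1
        have : (⟨((h.symm y.1 : ↥C) : X), _⟩ : ↥C) = h.symm y.1 := Subtype.ext rfl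
        rw [this, Homeomorph.apply_symm_apply]
      continuous_toFun := by
        apply Continuous.subtype_mk
        exact h.continuous.comp (Continuous.subtype_mk continuous_subtype_val _)
      continuous_invFun := by
        apply Continuous.subtype_mk
        exact continuous_subtype_val.comp (h.symm.continuous.comp continuous_subtype_val) }
  have hArc : IsArc A := ⟨χ.trans hu.toHomeomorph.symm⟩
  have heA : e ∈ A := ⟨⟨e, heC⟩, show (h ⟨e, heC⟩ : CantorFanSpace) ∈ A' from ⟨t0, hut0⟩, rfl⟩
  obtain ⟨ψ, hψ⟩ := he.2 A hAC hArc heA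
  apply interior_not_endpoint hu ht0 ht1
  refine ⟨ψ.trans χ, ?_⟩
  set p : ↥A := ψ ⟨0, by norm_num⟩ with hp
  show (h ⟨(p : X), hAC p.2⟩ : CantorFanSpace) = u t0
  have h1 : (⟨(p : X), hAC p.2⟩ : ↥C) = ⟨e, heC⟩ := Subtype.ext hψ
  rw [h1, hut0]

/-- a Cantor fan `C` contained in a Lelek fan `L` (same top `v`)
is nowhere dense in `L`. -/
theorem stmt5 {X : Type*} [MetricSpace X] (L C : Set X) (v : X)
    (hL : IsLelekFan L v) (hC : IsCantorFan C v) (hsub : C ⊆ L) :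
    IsNowhereDense ((Subtype.val ⁻¹' C : Set L)) := by
  classical
  obtain ⟨h⟩ := hC.2
  have hT2 : T2Space CantorFanSpace := h.symm.isEmbedding.t2Space
  have hCcomp : IsCompact C := hC.1.1.1.1.1
  have hCclosed : IsClosed C := hCcomp.isClosed
  have hclosedL : IsClosed (Subtype.val ⁻¹' C : Set L) :=
    hCclosed.preimage continuous_subtype_val
  rw [IsNowhereDense, hclosedL.closure_eq]
  by_contra hne
  rw [Set.eq_empty_iff_forall_notMem] at hne
  push_neg at hne
  obtain ⟨xh, hxh⟩ := hne
  rw [mem_interior] at hxh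
  obtain ⟨Uo, hUosub, hUoopen, hxUo⟩ := hxh
  obtain ⟨V, hVopen, hVeq⟩ := isOpen_induced_iff.mp hUoopen
  have hVC : ∀ y, y ∈ V → y ∈ L → y ∈ C := by
    intro y hyV hyL
    have : (⟨y, hyL⟩ : L) ∈ Uo := by rw [← hVeq]; exact hyV
    exact hUosub this
  have hxV : (xh : X) ∈ V := by rw [← hVeq] at hxUo; exact hxUo
  -- a point of L different from v
  obtain ⟨hvL, T, hTL, φT, hφT⟩ := hL.1.1.2
  have h10 : ((1, 0) : ℝ × ℝ) ∈ triodModel := Or.inl ⟨⟨by norm_num, le_refl 1⟩, rfl⟩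
  have hm10 : ((-1, 0) : ℝ × ℝ) ∈ triodModel := Or.inl ⟨⟨le_refl (-1), by norm_num⟩, rfl⟩
  have hy0 : ∃ y0 ∈ L, y0 ≠ v := by
    set p1 : X := ((φT ⟨(1, 0), h10⟩ : T) : X)
    set p2 : X := ((φT ⟨(-1, 0), hm10⟩ : T) : X)
    have hp1T : p1 ∈ T := (φT ⟨(1, 0), h10⟩).2
    have hp2T : p2 ∈ T := (φT ⟨(-1, 0), hm10⟩).2
    have hp12 : p1 ≠ p2 := by
      intro hh
      have := φT.injective (Subtype.ext hh)
      have := congrArg Subtype.val this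
      simp only [Prod.mk.injEq] at this
      norm_num at this
    rcases eq_or_ne p1 v with hh | hh
    · exact ⟨p2, hTL hp2T, fun h2 => hp12 (by rw [hh, h2])⟩
    · exact ⟨p1, hTL hp1T, hh⟩
  have hLconn : IsConnected L := hL.1.1.1.1.1.2
  -- a point of V ∩ L different from v
  have hx' : ∃ x', x' ∈ V ∧ x' ∈ L ∧ x' ≠ v := by
    rcases eq_or_ne (xh : X) v with hxv | hxv
    · obtain ⟨y0, hy0L, hy0v⟩ := hy0
      have hvV : v ∈ V := hxv ▸ hxV
      have key := hLconn.isPreconnected V ({v}ᶜ) hVopen isOpen_compl_singleton ?_ ?_ ?_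
      · obtain ⟨z, hzL, hzV, hzv⟩ := key
        exact ⟨z, hzV, hzL, hzv⟩
      · intro y hyL
        by_cases hy : y = v
        · left; rw [hy]; exact hvV
        · right; exact hy
      · exact ⟨v, hvL, hvV⟩
      · exact ⟨y0, hy0L, hy0v⟩
    · exact ⟨(xh : X), hxV, xh.2, hxv⟩
  obtain ⟨x', hx'V, hx'L, hx'v⟩ := hx'
  -- the closed set D' ⊆ C of points mapped into DD
  set D' : Set X := Subtype.val '' (⇑h ⁻¹' Stmt5Aux.DD) with hD'
  haveI : CompactSpace ↥C := isCompact_iff_compactSpace.mp hCcomp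
  have hDDclosed : IsClosed Stmt5Aux.DD := by
    haveI := hT2
    exact (isCompact_range (Stmt5Aux.continuous_cmk.comp
      (continuous_id.prodMk continuous_const))).isClosed
  have hD'closed : IsClosed D' :=
    (((hDDclosed.preimage h.continuous).isCompact).image continuous_subtype_val).isClosed
  -- every point of V ∩ L lies in D'
  have hVLD' : ∀ y, y ∈ V → y ∈ L → y ∈ D' := by
    intro y hyV hyL
    have hyc : y ∈ closure D' := by
      rw [mem_closure_iff]
      intro o ho hyo
      have hyE : y ∈ closure {x | IsEndpoint L x} := hL.2 hyL
      rcases mem_closure_iff.mp hyE (o ∩ V) (ho.inter hVopen) ⟨hyo, hyV⟩ with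
        ⟨e, ⟨heo, heV⟩, heE⟩
      refine ⟨e, heo, ?_⟩
      have heC : e ∈ C := hVC e heV heE.1
      have heEC : IsEndpoint C e :=
        ⟨heC, fun A hAC hArc heA => heE.2 A (hAC.trans hsub) hArc heA⟩
      exact ⟨⟨e, heC⟩, endpoint_mem_DD h heC heEC, rfl⟩
    rwa [hD'closed.closure_eq] at hyc
  -- an arc from v to x' in C
  have hx'C : x' ∈ C := hVC x' hx'V hx'L
  have hvC : v ∈ C := hC.1.2.1
  obtain ⟨A, hAC, hArc, hepv, hepx'⟩ := hC.1.1.1.2.1 v hvC x' hx'C (Ne.symm hx'v)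
  obtain ⟨φ', hφ'⟩ := hepx'
  -- a small subarc J of A inside V
  set f : ℝ → X := fun r => ((φ' (Stmt5Aux.pr r) : A) : X) with hfdef
  have hfc : Continuous f :=
    continuous_subtype_val.comp (φ'.continuous.comp Stmt5Aux.continuous_pr)
  have hf0 : f 0 = x' := by
    show ((φ' (Stmt5Aux.pr 0) : A) : X) = x'
    rw [Stmt5Aux.pr_of_mem (by constructor <;> norm_num)]
    exact hφ'
  have hfV : IsOpen (f ⁻¹' V) := hVopen.preimage hfc
  have h0f : (0 : ℝ) ∈ f ⁻¹' V := by rw [Set.mem_preimage, hf0]; exact hx'V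
  obtain ⟨δ, hδpos, hδ⟩ := Metric.isOpen_iff.mp hfV 0 h0f
  set ε : ℝ := min (δ/2) 1 with hεdef
  have hεpos : 0 < ε := lt_min (by linarith) one_pos
  have hε1 : ε ≤ 1 := min_le_right _ _
  have hεδ : ε < δ := lt_of_le_of_lt (min_le_left _ _) (by linarith)
  set J : Set X := f '' (Set.Icc 0 ε) with hJdef
  have hJpre : IsPreconnected J := isPreconnected_Icc.image f hfc.continuousOn
  have hJV : J ⊆ V := by
    rintro y ⟨r, hr, rfl⟩
    apply hδ
    rw [Metric.mem_ball, Real.dist_eq, sub_zero, abs_of_nonneg hr.1]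
    exact lt_of_le_of_lt hr.2 hεδ
  have hJA : J ⊆ A := by
    rintro y ⟨r, hr, rfl⟩
    exact (φ' (Stmt5Aux.pr r)).2
  have hJC : J ⊆ C := fun y hy => hAC (hJA hy)
  have hJD' : J ⊆ D' := fun y hy => hVLD' y (hJV hy) (hsub (hJC hy))
  have hx'J : x' ∈ J := ⟨0, ⟨le_refl 0, le_of_lt hεpos⟩, hf0⟩
  have hfεJ : f ε ∈ J := ⟨ε, ⟨le_of_lt hεpos, le_refl ε⟩, rfl⟩
  have hne2 : f ε ≠ x' := by
    rw [← hf0]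
    intro hh
    have h2 : φ' (Stmt5Aux.pr ε) = φ' (Stmt5Aux.pr 0) := Subtype.ext hh
    have h3 := φ'.injective h2
    rw [Stmt5Aux.pr_of_mem ⟨le_of_lt hεpos, hε1⟩,
      Stmt5Aux.pr_of_mem (by constructor <;> norm_num)] at h3
    have := congrArg Subtype.val h3
    simp only at this
    exact absurd this (ne_of_gt hεpos)
  -- lift J into ↥C
  set Jh : Set ↥C := Subtype.val ⁻¹' J with hJhdef
  have hJhimg : Subtype.val '' Jh = J := by
    rw [Subtype.image_preimage_coe]
    exact Set.inter_eq_right.mpr hJC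
  have hJhpre : IsPreconnected Jh :=
    IsInducing.subtypeVal.isPreconnected_image.mp (hJhimg ▸ hJpre)
  have hhd : ∀ jh : ↥C, jh ∈ Jh → (h jh : CantorFanSpace) ∈ Stmt5Aux.DD := by
    intro jh hjh
    obtain ⟨c, hc, hcx⟩ := hJD' hjh
    have : c = jh := Subtype.ext hcx
    rwa [this] at hc
  set ah : ↥C := ⟨x', hx'C⟩ with hahdef
  set bh : ↥C := ⟨f ε, hJC hfεJ⟩ with hbhdef
  have hahJh : ah ∈ Jh := hx'J
  have hbhJh : bh ∈ Jh := hfεJ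
  obtain ⟨za, hza⟩ := hhd ah hahJh
  obtain ⟨zb, hzb⟩ := hhd bh hbhJh
  have hzab : za ≠ zb := by
    intro hz
    apply hne2
    have : h bh = h ah := by rw [← hza, ← hzb, hz]
    have := h.injective this
    exact congrArg Subtype.val this
  obtain ⟨n, hn⟩ := Function.ne_iff.mp hzab
  set G : ↥C → ℝ := fun c => Stmt5Aux.Fn n (h c) with hGdef
  have hGc : Continuous G := (Stmt5Aux.continuous_Fn n).comp h.continuous
  have hKpre : IsPreconnected (G '' Jh) := hJhpre.image G hGc.continuousOn
  have hGval : ∀ jh : ↥C, jh ∈ Jh → ∃ z : ℕ → Bool,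
      (h jh : CantorFanSpace) = Stmt5Aux.cmk (z, ⟨1, by constructor <;> norm_num⟩) ∧
      G jh = (if z n then 1 else 0) := by
    intro jh hjh
    obtain ⟨z, hz⟩ := hhd jh hjh
    refine ⟨z, hz.symm, ?_⟩
    show Stmt5Aux.Fn n (h jh) = _
    rw [← hz, Stmt5Aux.Fn_cmk]
    simp
  obtain ⟨za', hza', hGa⟩ := hGval ah hahJh
  obtain ⟨zb', hzb', hGb⟩ := hGval bh hbhJh
  have hza'' : za' = za := by
    have := hza'.symm.trans hza.symm
    rcases Stmt5Aux.cmk_eq_iff.mp this with hh | ⟨h1, _⟩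
    · exact (Prod.ext_iff.mp hh).1
    · norm_num at h1
  have hzb'' : zb' = zb := by
    have := hzb'.symm.trans hzb.symm
    rcases Stmt5Aux.cmk_eq_iff.mp this with hh | ⟨h1, _⟩
    · exact (Prod.ext_iff.mp hh).1
    · norm_num at h1
  rw [hza''] at hGa
  rw [hzb''] at hGb
  have h01 : (0 : ℝ) ∈ G '' Jh ∧ (1 : ℝ) ∈ G '' Jh := by
    cases hca : za n <;> cases hcb : zb n
    · rw [hca, hcb] at hn; exact absurd rfl hn
    · constructor
      · exact ⟨ah, hahJh, by rw [hGa, hca]; simp⟩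
      · exact ⟨bh, hbhJh, by rw [hGb, hcb]; simp⟩
    · constructor
      · exact ⟨bh, hbhJh, by rw [hGb, hcb]; simp⟩
      · exact ⟨ah, hahJh, by rw [hGa, hca]; simp⟩
    · rw [hca, hcb] at hn; exact absurd rfl hn
  have hhalf : (1/2 : ℝ) ∈ G '' Jh :=
    hKpre.Icc_subset h01.1 h01.2 ⟨by norm_num, by norm_num⟩
  obtain ⟨jh, hjh, hGjh⟩ := hhalf
  obtain ⟨z, _, hGz⟩ := hGval jh hjh
  rw [hGz] at hGjh
  by_cases hzn : z n
  · rw [if_pos hzn] at hGjh; norm_num at hGjh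
  · rw [if_neg hzn] at hGjh; norm_num at hGjh
end

section
/- Let C = (Y × [0,1])/∼ be the cone over a Cantor set Y (where ∼ collapses Y × {0} to the top v), q : Y × [0,1] → C the quotient map, and let J, K be fans in C with K ⊆ J. Let r : J → K be a retraction. Then r is simple (i.e., r(A) ⊆ A for each leg A of J) if and only if there is a retraction R : F_J → F_K, where F_J = q⁻¹(J) and F_K = q⁻¹(K), such that q(R(x)) = r(q(x)) for all x ∈ F_J. -/
open Set Topology Filter

/-- The fence `F = Y × [0,1]` over the Cantor set `Y = ℕ → Bool`. -/
abbrev Fence : Type := (ℕ → Bool) × Set.Icc (0:ℝ) 1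

/-- The quotient map `q : F → C` onto the Cantor fan `C = F/∼`. -/
def q : Fence → CantorFanSpace := Quotient.mk (coneSetoid (ℕ → Bool))

/-- The top `v` of the Cantor fan `C`. -/
def vtop : CantorFanSpace := q ((fun _ => false), ⟨0, by norm_num⟩)

/-- The fence `F_K = q⁻¹(K)` of a subset `K` of the Cantor fan. -/
def FFence (K : Set CantorFanSpace) : Set Fence := q ⁻¹' K

/-- The fence `H_K = Cl_F(q⁻¹(K \ {v}))` of a subset `K` of the Cantor fan. -/
def HFence (K : Set CantorFanSpace) : Set Fence := closure (q ⁻¹' (K \ {vtop}))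

namespace Stmt17Aux

lemma q_cont : Continuous q := continuous_quot_mk

lemma q_eq {a b : Fence} : q a = q b ↔ a = b ∨ ((a.2 : ℝ) = 0 ∧ (b.2 : ℝ) = 0) :=
  ⟨fun h => Quotient.exact h, fun h => Quotient.sound h⟩

lemma q_surj : Function.Surjective q := Quotient.exists_rep

lemma q_eq_vtop {p : Fence} : q p = vtop ↔ (p.2 : ℝ) = 0 := by
  unfold vtop
  rw [q_eq]
  constructor
  · rintro (rfl | ⟨h, -⟩) <;> simp_all
  · intro h; exact Or.inr ⟨h, rfl⟩

/-- height function on the Cantor fan -/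
def ht : CantorFanSpace → Set.Icc (0:ℝ) 1 :=
  Quotient.lift (fun p : Fence => p.2) (by
    rintro a b (rfl | ⟨h1, h2⟩)
    · rfl
    · exact Subtype.ext (h1.trans h2.symm))

@[simp] lemma ht_q (p : Fence) : ht (q p) = p.2 := rfl

lemma ht_cont : Continuous ht := continuous_quot_lift _ continuous_snd

lemma ht_vtop : (ht vtop : ℝ) = 0 := rfl

/-- embedding witnessing Hausdorffness -/
def emb : CantorFanSpace → ℝ × (ℕ → ℝ) :=
  Quotient.lift (fun p : Fence => ((p.2 : ℝ), fun n => (p.2 : ℝ) * (cond (p.1 n) 1 0))) (by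
    rintro a b (rfl | ⟨h1, h2⟩)
    · rfl
    · simp [h1, h2])

lemma emb_cont : Continuous emb := by
  apply continuous_quot_lift
  refine Continuous.prodMk (continuous_subtype_val.comp continuous_snd) ?_
  refine continuous_pi fun n => Continuous.mul (continuous_subtype_val.comp continuous_snd) ?_
  exact (continuous_of_discreteTopology (f := fun b : Bool => (cond b 1 0 : ℝ))).comp
    ((continuous_apply n).comp continuous_fst)

lemma emb_inj : Function.Injective emb := by
  intro a b
  induction a using Quotient.inductionOn with | h p =>
  induction b using Quotient.inductionOn with | h p' =>
  intro h
  have h1 : (p.2 : ℝ) = (p'.2 : ℝ) := congrArg Prod.fst h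
  by_cases h0 : (p.2 : ℝ) = 0
  · exact Quotient.sound (Or.inr ⟨h0, h1 ▸ h0⟩)
  · refine Quotient.sound (Or.inl ?_)
    have h2 : ∀ n, (p.2 : ℝ) * (cond (p.1 n) 1 0) = (p'.2 : ℝ) * (cond (p'.1 n) 1 0) :=
      fun n => congrFun (congrArg Prod.snd h) n
    have hx : p.1 = p'.1 := by
      funext n
      have := h2 n
      rw [← h1] at this
      have hc : (cond (p.1 n) 1 0 : ℝ) = cond (p'.1 n) 1 0 := mul_left_cancel₀ h0 this
      cases hb : p.1 n <;> cases hb' : p'.1 n <;> simp_all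
    exact Prod.ext hx (Subtype.ext h1)

instance : T2Space CantorFanSpace := T2Space.of_injective_continuous emb_inj emb_cont

lemma isOpen_q_image {P : Set Fence} (hP : IsOpen P) (hpos : ∀ p ∈ P, (p.2 : ℝ) ≠ 0) :
    IsOpen (q '' P) := by
  have hpre : q ⁻¹' (q '' P) = P := by
    ext p'
    constructor
    · rintro ⟨p, hp, hqe⟩
      rcases q_eq.mp hqe with rfl | ⟨h1, h2⟩
      · exact hp
      · exact absurd h1 (hpos _ hp)
    · intro h; exact ⟨p', h, rfl⟩
  refine (isQuotientMap_quot_mk.isOpen_preimage).mp ?_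
  show IsOpen (q ⁻¹' (q '' P))
  rw [hpre]; exact hP

/-- a preconnected subset of the Cantor fan avoiding the top lies in a single thread -/
lemma thread_of_preconnected {S : Set CantorFanSpace} (hS : IsPreconnected S) (hv : vtop ∉ S)
    {x y : ℕ → Bool} {t s : Set.Icc (0:ℝ) 1} (ht0 : (t : ℝ) ≠ 0) (hs0 : (s : ℝ) ≠ 0)
    (hx : q (x, t) ∈ S) (hy : q (y, s) ∈ S) : x = y := by
  by_contra hxy
  obtain ⟨n, hn⟩ : ∃ n, x n ≠ y n := Function.ne_iff.mp hxy
  set P1 : Set Fence := {p | p.1 n = x n ∧ (p.2 : ℝ) ≠ 0} with hP1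
  set P2 : Set Fence := {p | p.1 n ≠ x n ∧ (p.2 : ℝ) ≠ 0} with hP2
  have hB : ∀ b : Bool, IsOpen {z : ℕ → Bool | z n = b} := fun b => by
    show IsOpen ((fun z : ℕ → Bool => z n) ⁻¹' {b})
    exact IsOpen.preimage (continuous_apply n) (isOpen_discrete {b})
  have hIc : IsOpen {u : Set.Icc (0:ℝ) 1 | (u : ℝ) ≠ 0} :=
    (isOpen_compl_singleton (x := (0:ℝ))).preimage continuous_subtype_val
  have hP1o : IsOpen P1 := by
    have : P1 = (Prod.fst ⁻¹' {z : ℕ → Bool | z n = x n}) ∩ (Prod.snd ⁻¹' {u : Set.Icc (0:ℝ) 1 | (u : ℝ) ≠ 0}) := rfl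
    rw [this]
    exact ((hB (x n)).preimage continuous_fst).inter (hIc.preimage continuous_snd)
  have hP2o : IsOpen P2 := by
    have : P2 = (Prod.fst ⁻¹' {z : ℕ → Bool | z n = x n}ᶜ) ∩ (Prod.snd ⁻¹' {u : Set.Icc (0:ℝ) 1 | (u : ℝ) ≠ 0}) := rfl
    rw [this]
    have hBc : IsClosed {z : ℕ → Bool | z n = x n} := by
      show IsClosed ((fun z : ℕ → Bool => z n) ⁻¹' {x n})
      exact (isClosed_discrete _).preimage (continuous_apply n)
    exact (hBc.isOpen_compl.preimage continuous_fst).inter (hIc.preimage continuous_snd)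
  have h1 : IsOpen (q '' P1) := isOpen_q_image hP1o fun p hp => hp.2
  have h2 : IsOpen (q '' P2) := isOpen_q_image hP2o fun p hp => hp.2
  have hcover : S ⊆ q '' P1 ∪ q '' P2 := by
    intro c hc
    obtain ⟨p, rfl⟩ := q_surj c
    have hp0 : (p.2 : ℝ) ≠ 0 := fun h => hv (q_eq_vtop.mpr h ▸ hc)
    by_cases hpx : p.1 n = x n
    · exact Or.inl ⟨p, ⟨hpx, hp0⟩, rfl⟩
    · exact Or.inr ⟨p, ⟨hpx, hp0⟩, rfl⟩
  have hne1 : (S ∩ q '' P1).Nonempty := ⟨q (x, t), hx, (x, t), ⟨rfl, ht0⟩, rfl⟩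
  have hne2 : (S ∩ q '' P2).Nonempty := ⟨q (y, s), hy, (y, s), ⟨Ne.symm hn, hs0⟩, rfl⟩
  obtain ⟨c, -, hc1, hc2⟩ := hS _ _ h1 h2 hcover hne1 hne2
  obtain ⟨p1, hp1, he1⟩ := hc1
  obtain ⟨p2, hp2, he2⟩ := hc2
  have : p1 = p2 := by
    rcases q_eq.mp (he1.trans he2.symm) with h | ⟨h, -⟩
    · exact h
    · exact absurd h hp1.2
  exact hp2.1 (this ▸ hp1.1)

lemma proj01 {w : ℝ} (hw : w ∈ Set.Icc (0:ℝ) 1) :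
    Set.projIcc (0:ℝ) 1 zero_le_one w = ⟨w, hw⟩ := Set.projIcc_of_mem _ hw

/-- every point of an arc emanating from the top lies on the same thread -/
lemma arc_thread {A : Set CantorFanSpace} (hv : IsEndpointOfArc A vtop)
    {x : ℕ → Bool} {t : Set.Icc (0:ℝ) 1} (ht0 : (t : ℝ) ≠ 0) (hp : q (x, t) ∈ A) :
    ∀ a ∈ A, a = q (x, ht a) := by
  obtain ⟨φ, hφ0⟩ := hv
  set F : ℝ → CantorFanSpace :=
    fun w => ((φ (Set.projIcc (0:ℝ) 1 zero_le_one w) : A) : CantorFanSpace) with hF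
  have hFcont : Continuous F :=
    continuous_subtype_val.comp (φ.continuous.comp continuous_projIcc)
  have hFA : ∀ w, F w ∈ A := fun w => (φ _).2
  have hzmem : (0:ℝ) ∈ Set.Icc (0:ℝ) 1 := by norm_num
  have hvtop_iff : ∀ u : Set.Icc (0:ℝ) 1, ((φ u : A) : CantorFanSpace) = vtop → u = ⟨0, hzmem⟩ := by
    intro u hu
    have : φ u = φ ⟨0, hzmem⟩ := Subtype.ext (hu.trans hφ0.symm)
    exact φ.injective this
  have himg : F '' Set.Ioc 0 1 = A \ {vtop} := by
    ext a
    constructor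
    · rintro ⟨w, hw, rfl⟩
      refine ⟨hFA w, ?_⟩
      intro hcon
      have hwI : w ∈ Set.Icc (0:ℝ) 1 := ⟨le_of_lt hw.1, hw.2⟩
      rw [hF] at hcon
      simp only [proj01 hwI] at hcon
      have := hvtop_iff _ hcon
      have : w = 0 := congrArg Subtype.val this
      exact absurd this (ne_of_gt hw.1)
    · rintro ⟨ha, hane⟩
      set u := φ.symm ⟨a, ha⟩ with hu
      have hau : ((φ u : A) : CantorFanSpace) = a := by rw [hu, φ.apply_symm_apply]
      have hune : (u : ℝ) ≠ 0 := by
        intro h0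
        have : u = ⟨0, hzmem⟩ := Subtype.ext h0
        exact hane (by rw [← hau, this, hφ0]; rfl)
      refine ⟨(u : ℝ), ⟨lt_of_le_of_ne u.2.1 (Ne.symm hune), u.2.2⟩, ?_⟩
      rw [hF]
      simp only [proj01 u.2, Subtype.coe_eta]
      exact hau
  have hS : IsPreconnected (A \ {vtop}) := by
    rw [← himg]
    exact (isPreconnected_Ioc).image F hFcont.continuousOn
  intro a ha
  by_cases hav : a = vtop
  · subst hav
    exact (q_eq_vtop.mpr rfl).symm
  · obtain ⟨⟨z, w⟩, rfl⟩ := q_surj a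
    have hw0 : (w : ℝ) ≠ 0 := fun h => hav (q_eq_vtop.mpr h)
    have hxz : x = z := by
      refine thread_of_preconnected hS (fun h => h.2 rfl) ht0 hw0 ?_ ⟨ha, hav⟩
      refine ⟨hp, fun h => ht0 ?_⟩
      exact q_eq_vtop.mp h
    subst hxz
    rfl

/-- heights along an arc from the top fill an initial interval -/
lemma arc_interval {A : Set CantorFanSpace} (hv : IsEndpointOfArc A vtop)
    {x : ℕ → Bool} {t : Set.Icc (0:ℝ) 1} (ht0 : (t : ℝ) ≠ 0) (hp : q (x, t) ∈ A) :
    ∀ u : Set.Icc (0:ℝ) 1, (u : ℝ) ≤ (t : ℝ) → q (x, u) ∈ A := by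
  have hth := arc_thread hv ht0 hp
  obtain ⟨φ, hφ0⟩ := hv
  set F : ℝ → CantorFanSpace :=
    fun w => ((φ (Set.projIcc (0:ℝ) 1 zero_le_one w) : A) : CantorFanSpace) with hF
  have hFcont : Continuous F :=
    continuous_subtype_val.comp (φ.continuous.comp continuous_projIcc)
  have hFA : ∀ w, F w ∈ A := fun w => (φ _).2
  have hzmem : (0:ℝ) ∈ Set.Icc (0:ℝ) 1 := by norm_num
  have hF0 : F 0 = vtop := by
    rw [hF]; simp only [proj01 hzmem]; exact hφ0
  set G : ℝ → ℝ := fun w => ((ht (F w) : ℝ)) with hG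
  have hGcont : Continuous G := continuous_subtype_val.comp (ht_cont.comp hFcont)
  have hG0 : G 0 = 0 := by rw [hG]; simp only [hF0]; exact ht_vtop
  set w0 : ℝ := ((φ.symm ⟨q (x, t), hp⟩ : Set.Icc (0:ℝ) 1) : ℝ) with hw0
  have hw0I : w0 ∈ Set.Icc (0:ℝ) 1 := (φ.symm ⟨q (x, t), hp⟩).2
  have hFw0 : F w0 = q (x, t) := by
    rw [hF]; simp only [proj01 hw0I, hw0, Subtype.coe_eta, φ.apply_symm_apply]
    rw [Set.projIcc_val]
    exact congrArg Subtype.val (φ.apply_symm_apply ⟨q (x, t), hp⟩)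
  have hGw0 : G w0 = (t : ℝ) := by rw [hG]; simp only [hFw0]; rfl
  intro u hu
  have : (u : ℝ) ∈ Set.Icc (G 0) (G w0) := by rw [hG0, hGw0]; exact ⟨u.2.1, hu⟩
  obtain ⟨w, hwmem, hGw⟩ := intermediate_value_Icc hw0I.1 hGcont.continuousOn this
  have haA := hFA w
  have heq := hth (F w) haA
  have hhw : ht (F w) = u := Subtype.ext hGw
  rw [hhw] at heq
  rw [← heq]
  exact haA

/-- the reversal homeomorphism of the unit interval -/
def revHomeo : (Set.Icc (0:ℝ) 1) ≃ₜ (Set.Icc (0:ℝ) 1) where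
  toFun u := ⟨1 - u, ⟨by linarith [u.2.2], by linarith [u.2.1]⟩⟩
  invFun u := ⟨1 - u, ⟨by linarith [u.2.2], by linarith [u.2.1]⟩⟩
  left_inv u := Subtype.ext (by simp)
  right_inv u := Subtype.ext (by simp)
  continuous_toFun := Continuous.subtype_mk (continuous_const.sub continuous_subtype_val) _
  continuous_invFun := Continuous.subtype_mk (continuous_const.sub continuous_subtype_val) _

/-- the initial segment of a thread, as a subset of the Cantor fan -/
def threadArc (x : ℕ → Bool) (m : ℝ) : Set CantorFanSpace :=
  {c | ∃ u : Set.Icc (0:ℝ) 1, (u : ℝ) ≤ m ∧ c = q (x, u)}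

lemma vtop_mem_threadArc {x : ℕ → Bool} {m : ℝ} (hm : 0 ≤ m) : vtop ∈ threadArc x m :=
  ⟨⟨0, by norm_num⟩, hm, (q_eq_vtop.mpr rfl).symm⟩

lemma mem_threadArc_iff {x : ℕ → Bool} {m : ℝ} (hm : 0 ≤ m) {u : Set.Icc (0:ℝ) 1} :
    q (x, u) ∈ threadArc x m ↔ (u : ℝ) ≤ m := by
  constructor
  · rintro ⟨u', hu', heq⟩
    rcases q_eq.mp heq with h | ⟨h, -⟩
    · have : u = u' := congrArg Prod.snd h
      rw [this]; exact hu'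
    · rw [h]; exact hm
  · intro h; exact ⟨u, h, rfl⟩

lemma threadArc_self_thread {x : ℕ → Bool} {m : ℝ} :
    ∀ c ∈ threadArc x m, c = q (x, ht c) := by
  rintro c ⟨u, hu, rfl⟩; rfl

variable {x : ℕ → Bool} {m : ℝ}

lemma threadArc_mul_mem (hm0 : 0 < m) (hm1 : m ≤ 1) (w : Set.Icc (0:ℝ) 1) :
    m * (w : ℝ) ∈ Set.Icc (0:ℝ) 1 :=
  ⟨mul_nonneg hm0.le w.2.1, le_trans (by nlinarith [w.2.2]) hm1⟩

/-- parametrization of a thread segment -/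
noncomputable def threadHomeo (x : ℕ → Bool) (hm0 : 0 < m) (hm1 : m ≤ 1) :
    (Set.Icc (0:ℝ) 1) ≃ₜ (threadArc x m) := by
  have hbij : Function.Bijective (fun w : Set.Icc (0:ℝ) 1 =>
      (⟨q (x, ⟨m * w, threadArc_mul_mem hm0 hm1 w⟩),
        ⟨⟨m * w, threadArc_mul_mem hm0 hm1 w⟩, by show m * (w:ℝ) ≤ m; nlinarith [w.2.1, w.2.2, hm0.le], rfl⟩⟩ :
        threadArc x m)) := by
    constructor
    · intro w w' hww
      have heq : q (x, (⟨m * w, _⟩ : Set.Icc (0:ℝ) 1)) = q (x, ⟨m * w', _⟩) :=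
        congrArg Subtype.val hww
      rcases q_eq.mp heq with h | ⟨h1, h2⟩
      · have : (⟨m * (w:ℝ), _⟩ : Set.Icc (0:ℝ) 1) = ⟨m * w', _⟩ := congrArg Prod.snd h
        have hmm : m * (w : ℝ) = m * w' := congrArg Subtype.val this
        exact Subtype.ext (mul_left_cancel₀ hm0.ne' hmm)
      · simp only at h1 h2
        have hw0 : (w : ℝ) = 0 := by
          have := mul_eq_zero.mp h1
          rcases this with h | h
          · exact absurd h hm0.ne'
          · exact h
        have hw'0 : (w' : ℝ) = 0 := by
          rcases mul_eq_zero.mp h2 with h | h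
          · exact absurd h hm0.ne'
          · exact h
        exact Subtype.ext (hw0.trans hw'0.symm)
    · rintro ⟨c, u, hu, rfl⟩
      refine ⟨⟨(u : ℝ) / m, ⟨div_nonneg u.2.1 hm0.le, (div_le_one hm0).mpr (le_trans hu le_rfl)⟩⟩, ?_⟩
      apply Subtype.ext
      show q (x, _) = q (x, u)
      refine congrArg (fun v : Set.Icc (0:ℝ) 1 => q (x, v)) (Subtype.ext ?_)
      show m * ((u:ℝ) / m) = (u : ℝ)
      field_simp
  have hcont : Continuous (fun w : Set.Icc (0:ℝ) 1 =>
      (⟨q (x, ⟨m * w, threadArc_mul_mem hm0 hm1 w⟩),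
        ⟨⟨m * w, threadArc_mul_mem hm0 hm1 w⟩, by show m * (w:ℝ) ≤ m; nlinarith [w.2.1, w.2.2, hm0.le], rfl⟩⟩ :
        threadArc x m)) := by
    apply Continuous.subtype_mk
    exact q_cont.comp (Continuous.prodMk continuous_const
      (Continuous.subtype_mk (continuous_const.mul continuous_subtype_val) _))
  exact hcont.homeoOfEquivCompactToT2 (f := Equiv.ofBijective _ hbij)

lemma threadHomeo_apply (hm0 : 0 < m) (hm1 : m ≤ 1) (w : Set.Icc (0:ℝ) 1) :
    ((threadHomeo x hm0 hm1 w : threadArc x m) : CantorFanSpace) =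
      q (x, ⟨m * w, threadArc_mul_mem hm0 hm1 w⟩) := rfl

lemma isArc_threadArc (hm0 : 0 < m) (hm1 : m ≤ 1) : IsArc (threadArc x m) :=
  ⟨(threadHomeo x hm0 hm1).symm⟩

lemma endpointOfArc_threadArc_vtop (hm0 : 0 < m) (hm1 : m ≤ 1) :
    IsEndpointOfArc (threadArc x m) vtop :=
  ⟨threadHomeo x hm0 hm1, by
    rw [threadHomeo_apply]
    apply q_eq_vtop.mpr
    show m * (0:ℝ) = 0
    ring⟩

lemma endpointOfArc_threadArc_top (hm0 : 0 < m) (hm1 : m ≤ 1) :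
    IsEndpointOfArc (threadArc x m) (q (x, ⟨m, ⟨hm0.le, hm1⟩⟩)) := by
  refine ⟨revHomeo.trans (threadHomeo x hm0 hm1), ?_⟩
  show ((threadHomeo x hm0 hm1 (revHomeo ⟨0, _⟩) : threadArc x m) : CantorFanSpace) = _
  rw [threadHomeo_apply]
  refine congrArg (fun v : Set.Icc (0:ℝ) 1 => q (x, v)) (Subtype.ext ?_)
  show m * ((1:ℝ) - 0) = m
  ring

lemma fan_interval {J : Set CantorFanSpace} (hJfan : IsFanWithTop J vtop)
    {x : ℕ → Bool} {t : Set.Icc (0:ℝ) 1} (ht0 : (t : ℝ) ≠ 0) (hp : q (x, t) ∈ J) :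
    ∀ u : Set.Icc (0:ℝ) 1, (u : ℝ) ≤ (t : ℝ) → q (x, u) ∈ J := by
  have hvJ : vtop ∈ J := hJfan.2.1
  have hne : vtop ≠ q (x, t) := fun h => ht0 (q_eq_vtop.mp h.symm)
  obtain ⟨A, hAJ, hArc, hAv, hAp⟩ := hJfan.1.1.2.1 vtop hvJ (q (x, t)) hp hne
  intro u hu
  have hpA : q (x, t) ∈ A := by
    obtain ⟨φ, hφ⟩ := hAp
    rw [← hφ]; exact (φ _).2
  exact hAJ (arc_interval hAv ht0 hpA u hu)

lemma isEndpoint_of_max {J : Set CantorFanSpace} (hJsub : J ⊆ Set.univ)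
    {x : ℕ → Bool} {m : ℝ} (hm0 : 0 < m) (hm1 : m ≤ 1)
    (hmem : q (x, ⟨m, ⟨hm0.le, hm1⟩⟩) ∈ J)
    (hmax : ∀ u : Set.Icc (0:ℝ) 1, q (x, u) ∈ J → (u : ℝ) ≤ m) :
    IsEndpoint J (q (x, ⟨m, ⟨hm0.le, hm1⟩⟩)) := by
  set e : CantorFanSpace := q (x, ⟨m, ⟨hm0.le, hm1⟩⟩) with he
  refine ⟨hmem, ?_⟩
  intro B hBJ hBarc heB
  obtain ⟨φ⟩ := hBarc
  set ψ := φ.symm with hψdef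
  set u₀ : Set.Icc (0:ℝ) 1 := φ ⟨e, heB⟩ with hu₀def
  have hψu₀ : ((ψ u₀ : B) : CantorFanSpace) = e := by
    rw [hψdef, hu₀def, φ.symm_apply_apply]
  by_cases h0 : (u₀ : ℝ) = 0
  · refine ⟨ψ, ?_⟩
    have : (⟨0, by norm_num⟩ : Set.Icc (0:ℝ) 1) = u₀ := Subtype.ext h0.symm
    rw [this]; exact hψu₀
  by_cases h1 : (u₀ : ℝ) = 1
  · refine ⟨revHomeo.trans ψ, ?_⟩
    show ((ψ (revHomeo ⟨0, by norm_num⟩) : B) : CantorFanSpace) = e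
    have : revHomeo ⟨0, by norm_num⟩ = u₀ := Subtype.ext (by
      show (1:ℝ) - 0 = (u₀ : ℝ)
      linarith [h1])
    rw [this]; exact hψu₀
  exfalso
  have hu₀pos : 0 < (u₀ : ℝ) := lt_of_le_of_ne u₀.2.1 (Ne.symm h0)
  have hu₀lt : (u₀ : ℝ) < 1 := lt_of_le_of_ne u₀.2.2 h1
  -- the open set of points of height > m/2
  set W : Set CantorFanSpace := q '' {p : Fence | m / 2 < (p.2 : ℝ)} with hWdef
  have hWopen : IsOpen W := by
    apply isOpen_q_image
    · exact (isOpen_Ioi (a := m / 2)).preimage (continuous_subtype_val.comp continuous_snd)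
    · intro p hp; have : (0:ℝ) < (p.2 : ℝ) := lt_of_le_of_lt (by linarith) hp
      exact ne_of_gt this
  have heW : e ∈ W := ⟨(x, ⟨m, ⟨hm0.le, hm1⟩⟩), by show m / 2 < m; linarith, rfl⟩
  set Ψ : ℝ → CantorFanSpace :=
    fun w => ((ψ (Set.projIcc (0:ℝ) 1 zero_le_one w) : B) : CantorFanSpace) with hΨdef
  have hΨcont : Continuous Ψ :=
    continuous_subtype_val.comp (ψ.continuous.comp continuous_projIcc)
  have hΨB : ∀ w, Ψ w ∈ B := fun w => (ψ _).2
  have hΨu₀ : Ψ (u₀ : ℝ) = e := by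
    rw [hΨdef]; simp only [proj01 u₀.2, Subtype.coe_eta]; exact hψu₀
  have hO : IsOpen (Ψ ⁻¹' W) := hWopen.preimage hΨcont
  have hu₀O : (u₀ : ℝ) ∈ Ψ ⁻¹' W := by
    show Ψ (u₀ : ℝ) ∈ W; rw [hΨu₀]; exact heW
  obtain ⟨ε, hε, hball⟩ := Metric.isOpen_iff.mp hO (u₀ : ℝ) hu₀O
  set a : ℝ := max ((u₀ : ℝ) - ε / 2) ((u₀ : ℝ) / 2) with hadef
  set b : ℝ := min ((u₀ : ℝ) + ε / 2) (((u₀ : ℝ) + 1) / 2) with hbdef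
  have ha0 : 0 < a := lt_max_of_lt_right (by linarith)
  have hau₀ : a < (u₀ : ℝ) := max_lt (by linarith) (by linarith)
  have hu₀b : (u₀ : ℝ) < b := lt_min (by linarith) (by linarith)
  have hb1 : b < 1 := lt_of_le_of_lt (min_le_right _ _) (by linarith)
  have hsub01 : Set.Icc a b ⊆ Set.Icc (0:ℝ) 1 := fun w hw =>
    ⟨le_trans ha0.le hw.1, le_trans hw.2 hb1.le⟩
  have hsubO : Set.Icc a b ⊆ Ψ ⁻¹' W := by
    intro w hw
    apply hball
    rw [Metric.mem_ball, Real.dist_eq, abs_lt]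
    constructor
    · have : (u₀ : ℝ) - ε / 2 ≤ a := le_max_left _ _
      have := hw.1; linarith
    · have : b ≤ (u₀ : ℝ) + ε / 2 := min_le_left _ _
      have := hw.2; linarith
  have hvim : vtop ∉ Ψ '' Set.Icc a b := by
    rintro ⟨w, hw, hΨw⟩
    obtain ⟨p, hp, hqp⟩ := hsubO hw
    rw [hΨw] at hqp
    exact (lt_irrefl (0:ℝ)) (by
      have h2 : (p.2 : ℝ) = 0 := q_eq_vtop.mp hqp
      have hp' : m / 2 < (p.2 : ℝ) := hp
      rw [h2] at hp'
      linarith)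
  have hpre : IsPreconnected (Ψ '' Set.Icc a b) := isPreconnected_Icc.image _ hΨcont.continuousOn
  have heim : e ∈ Ψ '' Set.Icc a b := ⟨(u₀ : ℝ), ⟨hau₀.le, hu₀b.le⟩, hΨu₀⟩
  have hthr : ∀ w ∈ Set.Icc a b, Ψ w = q (x, ht (Ψ w)) := by
    intro w hw
    obtain ⟨⟨z, v⟩, hzv⟩ := q_surj (Ψ w)
    have hv0 : (v : ℝ) ≠ 0 := by
      intro h2
      exact hvim ⟨w, hw, by rw [← hzv]; exact q_eq_vtop.mpr h2⟩
    have hxz : x = z := by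
      refine thread_of_preconnected (t := ⟨m, ⟨hm0.le, hm1⟩⟩) (s := v) hpre hvim
        (by exact ne_of_gt hm0) hv0 heim ⟨w, hw, hzv.symm⟩
    rw [← hzv, ← hxz]
    rfl
  set G : ℝ → ℝ := fun w => ((ht (Ψ w) : ℝ)) with hGdef
  have hGcont : Continuous G := continuous_subtype_val.comp (ht_cont.comp hΨcont)
  have hGu₀ : G (u₀ : ℝ) = m := by rw [hGdef]; simp only [hΨu₀, he]; rfl
  have hGinj : ∀ w ∈ Set.Icc a b, ∀ w' ∈ Set.Icc a b, G w = G w' → w = w' := by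
    intro w hw w' hw' hG
    have h1 : Ψ w = Ψ w' := by
      rw [hthr w hw, hthr w' hw']
      exact congrArg (fun v : Set.Icc (0:ℝ) 1 => q (x, v)) (Subtype.ext hG)
    have h2 : ψ (Set.projIcc (0:ℝ) 1 zero_le_one w) = ψ (Set.projIcc (0:ℝ) 1 zero_le_one w') :=
      Subtype.ext h1
    have h3 := ψ.injective h2
    have h4 := congrArg Subtype.val h3
    rw [proj01 (hsub01 hw), proj01 (hsub01 hw')] at h4
    exact h4
  have hGle : ∀ w ∈ Set.Icc a b, G w ≤ m := by
    intro w hw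
    have h1 := hthr w hw
    have h2 : Ψ w ∈ J := hBJ (hΨB w)
    rw [h1] at h2
    exact hmax _ h2
  have hau₀' : (u₀ : ℝ) ∈ Set.Icc a b := ⟨hau₀.le, hu₀b.le⟩
  have haab : a ∈ Set.Icc a b := ⟨le_refl _, by linarith⟩
  have hbab : b ∈ Set.Icc a b := ⟨by linarith, le_refl _⟩
  have hGa : G a < m := by
    rcases lt_or_eq_of_le (hGle a haab) with h | h
    · exact h
    · exfalso
      have := hGinj a haab (u₀ : ℝ) hau₀' (h.trans hGu₀.symm)
      rw [this] at hau₀; exact lt_irrefl _ hau₀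
  have hGb : G b < m := by
    rcases lt_or_eq_of_le (hGle b hbab) with h | h
    · exact h
    · exfalso
      have := hGinj b hbab (u₀ : ℝ) hau₀' (h.trans hGu₀.symm)
      rw [this] at hu₀b; exact lt_irrefl _ hu₀b
  rcases le_total (G a) (G b) with hab | hab
  · have hsub := intermediate_value_Icc hau₀.le hGcont.continuousOn
    have : G b ∈ Set.Icc (G a) (G (u₀ : ℝ)) := by rw [hGu₀]; exact ⟨hab, hGb.le⟩
    obtain ⟨c, hc, hGc⟩ := hsub this
    have hcab : c ∈ Set.Icc a b := ⟨hc.1, le_trans hc.2 hu₀b.le⟩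
    have := hGinj c hcab b hbab hGc
    rw [this] at hc
    exact absurd hc.2 (not_le.mpr hu₀b)
  · have hsub := intermediate_value_Icc' hu₀b.le hGcont.continuousOn
    have : G a ∈ Set.Icc (G b) (G (u₀ : ℝ)) := by rw [hGu₀]; exact ⟨hab, hGa.le⟩
    obtain ⟨c, hc, hGc⟩ := hsub this
    have hcab : c ∈ Set.Icc a b := ⟨le_trans hau₀.le hc.1, hc.2⟩
    have := hGinj c hcab a haab hGc
    rw [this] at hc
    exact absurd hc.1 (not_le.mpr hau₀)

end Stmt17Aux

/-- a retraction `r : J → K` between fans in the Cantor fan is simple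
(maps every leg of `J` into itself) iff it lifts to a retraction `R : F_J → F_K`
of the fences with `q ∘ R = r ∘ q` on `F_J`. -/
theorem stmt17 (J K : Set CantorFanSpace)
    (hJ : IsFanWithTop J vtop) (hK : IsFanWithTop K vtop) (hKJ : K ⊆ J)
    (r : CantorFanSpace → CantorFanSpace)
    (hr : ContinuousOn r J) (hm : Set.MapsTo r J K) (hid : Set.EqOn r id K) :
    (∀ A ∈ Legs J vtop, r '' A ⊆ A) ↔
      ∃ R : Fence → Fence, ContinuousOn R (FFence J) ∧
        Set.MapsTo R (FFence J) (FFence K) ∧ Set.EqOn R id (FFence K) ∧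
        ∀ x ∈ FFence J, q (R x) = r (q x) := by
  classical
  have hvJ : vtop ∈ J := hJ.2.1
  have hvK : vtop ∈ K := hK.2.1
  have hrv : r vtop = vtop := hid hvK
  have hJcomp : IsCompact J := hJ.1.1.1.1
  constructor
  · intro hsimple
    have key : ∀ z : Fence, z ∈ FFence J → r (q z) = q (z.1, Stmt17Aux.ht (r (q z))) := by
      rintro ⟨x, u⟩ hz
      have hqz : q (x, u) ∈ J := hz
      by_cases hu0 : (u : ℝ) = 0
      · have h1 : q (x, u) = vtop := Stmt17Aux.q_eq_vtop.mpr hu0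
        rw [h1, hrv]
        exact ((Stmt17Aux.q_eq_vtop (p := ((x, u).1, Stmt17Aux.ht vtop))).mpr rfl).symm
      · set S : Set ℝ := Subtype.val '' ((fun w : Set.Icc (0:ℝ) 1 => q (x, w)) ⁻¹' J) with hS
        have hScomp : IsCompact S := by
          apply IsCompact.image _ continuous_subtype_val
          have hcl : IsClosed ((fun w : Set.Icc (0:ℝ) 1 => q (x, w)) ⁻¹' J) :=
            (hJcomp.isClosed).preimage
              (Stmt17Aux.q_cont.comp (Continuous.prodMk continuous_const continuous_id))
          exact hcl.isCompact
        have hSne : S.Nonempty := ⟨(u : ℝ), ⟨u, hqz, rfl⟩⟩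
        set m : ℝ := sSup S with hmdef
        have hmS : m ∈ S := hScomp.sSup_mem hSne
        obtain ⟨um, humJ, humv⟩ := hmS
        have hum : ∀ w : Set.Icc (0:ℝ) 1, q (x, w) ∈ J → (w : ℝ) ≤ m :=
          fun w hw => le_csSup hScomp.bddAbove ⟨w, hw, rfl⟩
        have hu_le : (u : ℝ) ≤ m := hum u hqz
        have hm0 : 0 < m := lt_of_lt_of_le (lt_of_le_of_ne u.2.1 (Ne.symm hu0)) hu_le
        have hm1 : m ≤ 1 := humv ▸ um.2.2
        have humem : q (x, (⟨m, ⟨hm0.le, hm1⟩⟩ : Set.Icc (0:ℝ) 1)) ∈ J := by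
          have h2 : um = ⟨m, ⟨hm0.le, hm1⟩⟩ := Subtype.ext humv
          rw [← h2]; exact humJ
        have hend := Stmt17Aux.isEndpoint_of_max (Set.subset_univ J) hm0 hm1 humem hum
        have hsubJ : Stmt17Aux.threadArc x m ⊆ J := by
          rintro c ⟨w, hwm, rfl⟩
          exact Stmt17Aux.fan_interval hJ (ne_of_gt hm0) humem w hwm
        have hleg : Stmt17Aux.threadArc x m ∈ Legs J vtop := by
          refine ⟨_, hend, hsubJ, Or.inr ⟨?_, Stmt17Aux.isArc_threadArc hm0 hm1,
            Stmt17Aux.endpointOfArc_threadArc_vtop hm0 hm1,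
            Stmt17Aux.endpointOfArc_threadArc_top hm0 hm1⟩⟩
          intro hveq
          exact (ne_of_gt hm0) (Stmt17Aux.q_eq_vtop.mp hveq.symm)
        have hpmem : q (x, u) ∈ Stmt17Aux.threadArc x m := ⟨u, hu_le, rfl⟩
        have hrmem := hsimple _ hleg ⟨q (x, u), hpmem, rfl⟩
        obtain ⟨w, hwm, hwq⟩ := hrmem
        rw [hwq]
        rfl
    refine ⟨fun z => (z.1, Stmt17Aux.ht (r (q z))), ?_, ?_, ?_, ?_⟩
    · apply ContinuousOn.prodMk continuousOn_fst
      exact Stmt17Aux.ht_cont.comp_continuousOn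
        (hr.comp Stmt17Aux.q_cont.continuousOn (fun z hz => hz))
    · intro z hz
      show q _ ∈ K
      rw [← key z hz]
      exact hm hz
    · intro z hz
      have hq : q z ∈ K := hz
      have h1 : r (q z) = q z := hid hq
      show (z.1, Stmt17Aux.ht (r (q z))) = z
      rw [h1]
      rfl
    · intro z hz
      exact (key z hz).symm
  · rintro ⟨R, hRc, hRm, hRid, hRq⟩ A hA
    obtain ⟨e, heEnd, hAJ, hAft⟩ := hA
    rintro _ ⟨p, hpA, rfl⟩
    rcases hAft with ⟨heq, hAs⟩ | ⟨hne, hArc, hAv, hAe⟩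
    · rw [hAs] at hpA ⊢
      have h1 : p = vtop := hpA
      rw [h1, hrv]
      rfl
    · have hvA : vtop ∈ A := by
        obtain ⟨φ, hφ⟩ := hAv; rw [← hφ]; exact (φ _).2
      obtain ⟨⟨x, u⟩, hpq⟩ := Stmt17Aux.q_surj p
      subst hpq
      by_cases hu0 : (u : ℝ) = 0
      · have h1 : q (x, u) = vtop := Stmt17Aux.q_eq_vtop.mpr hu0
        rw [h1, hrv]; exact hvA
      · have hpJ : q (x, u) ∈ J := hAJ hpA
        have hseg : ∀ w : Set.Icc (0:ℝ) 1, (w : ℝ) ≤ (u : ℝ) → q (x, w) ∈ A :=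
          Stmt17Aux.arc_interval hAv hu0 hpA
        have h0mem : ((x, ⟨0, by norm_num⟩) : Fence) ∈ FFence K := by
          show q ((x, ⟨0, by norm_num⟩) : Fence) ∈ K
          have h0 : q ((x, ⟨0, by norm_num⟩) : Fence) = vtop := Stmt17Aux.q_eq_vtop.mpr rfl
          rw [h0]; exact hvK
        have hfoot : R ((x, ⟨0, by norm_num⟩) : Fence) = (x, ⟨0, by norm_num⟩) := hRid h0mem
        set f : ℝ → (ℕ → Bool) :=
          fun w => (R (x, Set.projIcc (0:ℝ) 1 zero_le_one w)).1 with hf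
        have hmapsto : Set.MapsTo (fun w : ℝ => ((x, Set.projIcc (0:ℝ) 1 zero_le_one w) : Fence))
            (Set.Icc 0 (u : ℝ)) (FFence J) := by
          intro w hw
          have hw01 : w ∈ Set.Icc (0:ℝ) 1 := ⟨hw.1, le_trans hw.2 u.2.2⟩
          show q ((x, Set.projIcc (0:ℝ) 1 zero_le_one w) : Fence) ∈ J
          rw [Stmt17Aux.proj01 hw01]
          exact hAJ (hseg ⟨w, hw01⟩ hw.2)
        have hfc : ContinuousOn f (Set.Icc 0 (u : ℝ)) := by
          have hgc : Continuous (fun w : ℝ => ((x, Set.projIcc (0:ℝ) 1 zero_le_one w) : Fence)) :=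
            Continuous.prodMk continuous_const continuous_projIcc
          exact (hRc.comp hgc.continuousOn hmapsto).fst
        have hsub : (f '' Set.Icc 0 (u : ℝ)).Subsingleton :=
          (isTotallyDisconnected_of_totallyDisconnectedSpace Set.univ) _ (Set.subset_univ _)
            (isPreconnected_Icc.image f hfc)
        have hf0 : f 0 = x := by
          rw [hf]
          simp only [Stmt17Aux.proj01 (⟨le_refl (0:ℝ), zero_le_one⟩ : (0:ℝ) ∈ Set.Icc (0:ℝ) 1)]
          rw [hfoot]
        have hfu : (R ((x, u) : Fence)).1 = x := by
          have h1 : f (u : ℝ) = f 0 :=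
            hsub ⟨(u : ℝ), ⟨u.2.1, le_refl _⟩, rfl⟩ ⟨0, ⟨le_refl _, u.2.1⟩, rfl⟩
          rw [hf0] at h1
          rw [hf] at h1
          simp only [Stmt17Aux.proj01 u.2, Subtype.coe_eta] at h1
          exact h1
        have hzJ : ((x, u) : Fence) ∈ FFence J := hpJ
        have hcomm := hRq (x, u) hzJ
        set s : Set.Icc (0:ℝ) 1 := (R ((x, u) : Fence)).2 with hsdef
        have hRxu : R ((x, u) : Fence) = (x, s) := by
          have : R ((x, u) : Fence) = ((R ((x, u) : Fence)).1, s) := rfl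
          rw [this, hfu]
        have hrp : r (q (x, u)) = q (x, s) := by rw [← hcomm, hRxu]
        by_cases hs0 : (s : ℝ) = 0
        · rw [hrp, (Stmt17Aux.q_eq_vtop (p := ((x, s) : Fence))).mpr hs0]
          exact hvA
        · have hrpK : q (x, s) ∈ K := by rw [← hrp]; exact hm hpJ
          have hrpJ : q (x, s) ∈ J := hKJ hrpK
          have htth := Stmt17Aux.arc_thread hAv hu0 hpA
          have heA : e ∈ A := by
            obtain ⟨φ, hφ⟩ := hAe; rw [← hφ]; exact (φ _).2
          have heth : e = q (x, Stmt17Aux.ht e) := htth e heA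
          set me : Set.Icc (0:ℝ) 1 := Stmt17Aux.ht e with hmedef
          have hme0 : (me : ℝ) ≠ 0 := by
            intro h
            exact hne (by rw [heth]; exact (Stmt17Aux.q_eq_vtop.mpr h).symm)
          have hspos : 0 < (s : ℝ) := lt_of_le_of_ne s.2.1 (Ne.symm hs0)
          have hsme : (s : ℝ) ≤ (me : ℝ) := by
            by_contra hgt
            push_neg at hgt
            have hsubJ : ∀ w : Set.Icc (0:ℝ) 1, (w : ℝ) ≤ (s : ℝ) → q (x, w) ∈ J :=
              Stmt17Aux.fan_interval hJ hs0 hrpJ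
            have hs1 : (s : ℝ) ≤ 1 := s.2.2
            have hTsub : Stmt17Aux.threadArc x (s : ℝ) ⊆ J := by
              rintro c ⟨w, hws, rfl⟩; exact hsubJ w hws
            have heT : e ∈ Stmt17Aux.threadArc x (s : ℝ) := by
              rw [heth]; exact ⟨me, hgt.le, rfl⟩
            obtain ⟨ψ, hψ0⟩ := heEnd.2 _ hTsub (Stmt17Aux.isArc_threadArc hspos hs1) heT
            set Φ : ℝ → CantorFanSpace := fun w =>
              ((ψ (Set.projIcc (0:ℝ) 1 zero_le_one w) : Stmt17Aux.threadArc x (s : ℝ)) :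
                CantorFanSpace) with hΦdef
            have hΦcont : Continuous Φ :=
              continuous_subtype_val.comp (ψ.continuous.comp continuous_projIcc)
            have hΦT : ∀ w, Φ w ∈ Stmt17Aux.threadArc x (s : ℝ) := fun w => (ψ _).2
            have hΦ0 : Φ 0 = e := by
              rw [hΦdef]
              simp only [Stmt17Aux.proj01 (⟨le_refl (0:ℝ), zero_le_one⟩ : (0:ℝ) ∈ Set.Icc (0:ℝ) 1)]
              exact hψ0
            set G : ℝ → ℝ := fun w => ((Stmt17Aux.ht (Φ w) : ℝ)) with hGdef
            have hGcont : Continuous G :=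
              continuous_subtype_val.comp (Stmt17Aux.ht_cont.comp hΦcont)
            have hG0 : G 0 = (me : ℝ) := by
              rw [hGdef]; simp only [hΦ0, heth]; rfl
            have hGinj : ∀ w ∈ Set.Icc (0:ℝ) 1, ∀ w' ∈ Set.Icc (0:ℝ) 1, G w = G w' → w = w' := by
              intro w hw w' hw' hGe
              have h1 : Φ w = Φ w' := by
                rw [Stmt17Aux.threadArc_self_thread _ (hΦT w),
                  Stmt17Aux.threadArc_self_thread _ (hΦT w')]
                exact congrArg (fun v : Set.Icc (0:ℝ) 1 => q (x, v)) (Subtype.ext hGe)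
              have h2 := ψ.injective (Subtype.ext h1)
              have h3 := congrArg Subtype.val h2
              rw [Stmt17Aux.proj01 hw, Stmt17Aux.proj01 hw'] at h3
              exact h3
            -- parameters hitting heights 0 and s
            have hvT : vtop ∈ Stmt17Aux.threadArc x (s : ℝ) := Stmt17Aux.vtop_mem_threadArc hspos.le
            have hsT : q (x, s) ∈ Stmt17Aux.threadArc x (s : ℝ) := ⟨s, le_refl _, rfl⟩
            set a1 : ℝ := ((ψ.symm ⟨vtop, hvT⟩ : Set.Icc (0:ℝ) 1) : ℝ) with ha1def
            set b1 : ℝ := ((ψ.symm ⟨q (x, s), hsT⟩ : Set.Icc (0:ℝ) 1) : ℝ) with hb1def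
            have ha1I : a1 ∈ Set.Icc (0:ℝ) 1 := (ψ.symm ⟨vtop, hvT⟩).2
            have hb1I : b1 ∈ Set.Icc (0:ℝ) 1 := (ψ.symm ⟨q (x, s), hsT⟩).2
            have hΦa1 : Φ a1 = vtop := by
              rw [hΦdef]
              simp only [Stmt17Aux.proj01 ha1I, Subtype.coe_eta, ψ.apply_symm_apply]
              exact congrArg Subtype.val (ψ.apply_symm_apply ⟨vtop, hvT⟩)
            have hΦb1 : Φ b1 = q (x, s) := by
              rw [hΦdef]
              simp only [Stmt17Aux.proj01 hb1I, Subtype.coe_eta, ψ.apply_symm_apply]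
              exact congrArg Subtype.val (ψ.apply_symm_apply ⟨q (x, s), hsT⟩)
            have hGa1 : G a1 = 0 := by rw [hGdef]; simp only [hΦa1]; exact Stmt17Aux.ht_vtop
            have hGb1 : G b1 = (s : ℝ) := by rw [hGdef]; simp only [hΦb1]; rfl
            have h0I : (0 : ℝ) ∈ Set.Icc (0:ℝ) 1 := ⟨le_refl _, zero_le_one⟩
            have hmepos : 0 < (me : ℝ) := lt_of_le_of_ne me.2.1 (Ne.symm hme0)
            have ha1pos : 0 < a1 := by
              rcases lt_or_eq_of_le ha1I.1 with h | h
              · exact h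
              · exfalso
                apply hme0
                have h2 : G a1 = G 0 := by rw [← h]
                rw [hGa1, hG0] at h2
                exact h2.symm
            have hb1pos : 0 < b1 := by
              rcases lt_or_eq_of_le hb1I.1 with h | h
              · exact h
              · exfalso
                have h2 : G b1 = G 0 := by rw [← h]
                rw [hGb1, hG0] at h2
                exact absurd h2 (ne_of_gt hgt)
            rcases le_total a1 b1 with hab | hab
            · have hsub2 := intermediate_value_Icc hab hGcont.continuousOn
              have hmem2 : (me : ℝ) ∈ Set.Icc (G a1) (G b1) := by
                rw [hGa1, hGb1]; exact ⟨hmepos.le, hgt.le⟩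
              obtain ⟨c, hc, hGc⟩ := hsub2 hmem2
              have hcI : c ∈ Set.Icc (0:ℝ) 1 := ⟨le_trans ha1pos.le hc.1, le_trans hc.2 hb1I.2⟩
              have hc0 : c = 0 := hGinj c hcI 0 h0I (by rw [hGc, hG0])
              rw [hc0] at hc
              exact absurd hc.1 (not_le.mpr ha1pos)
            · have hsub2 := intermediate_value_Icc' hab hGcont.continuousOn
              have hmem2 : (me : ℝ) ∈ Set.Icc (G a1) (G b1) := by
                rw [hGa1, hGb1]; exact ⟨hmepos.le, hgt.le⟩
              obtain ⟨c, hc, hGc⟩ := hsub2 hmem2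
              have hcI : c ∈ Set.Icc (0:ℝ) 1 := ⟨le_trans hb1pos.le hc.1, le_trans hc.2 ha1I.2⟩
              have hc0 : c = 0 := hGinj c hcI 0 h0I (by rw [hGc, hG0])
              rw [hc0] at hc
              exact absurd hc.1 (not_le.mpr hb1pos)
          rw [hrp]
          exact Stmt17Aux.arc_interval hAv hme0 (by rw [← heth]; exact heA) s hsme
end

section
/- With C = (Y × [0,1])/∼ the cone over a Cantor set, J, K fans in C with K ⊆ J, fences H_J = Cl(q⁻¹(J \ {v})) and H_K = Cl(q⁻¹(K \ {v})): if r : J → K is a retraction and there exists a retraction R : H_J → H_K with q(R(x)) = r(q(x)) for all x ∈ H_J, then r is semi-simple, i.e., for each leg A of J there is a leg B of J with r(A) ⊆ B. -/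
open Set Topology Filter

section Stmt18Aux

open Set Filter Topology

lemma q_continuous : Continuous q := continuous_quot_mk

lemma q_eq {a b : Fence} : q a = q b ↔ a = b ∨ (((a.2:ℝ) = 0) ∧ ((b.2:ℝ) = 0)) :=
  ⟨fun h => Quotient.exact h, fun h => Quotient.sound h⟩

noncomputable def ht : CantorFanSpace → ℝ :=
  Quotient.lift (fun p : Fence => (p.2 : ℝ)) (by
    rintro a b (rfl | ⟨h1, h2⟩)
    · rfl
    · simp only [h1, h2])

lemma ht_q (p : Fence) : ht (q p) = (p.2 : ℝ) := rfl

lemma ht_continuous : Continuous ht :=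
  Continuous.quotient_lift (continuous_subtype_val.comp continuous_snd) _

lemma ht_mem (z : CantorFanSpace) : ht z ∈ Set.Icc (0:ℝ) 1 := by
  induction z using Quotient.ind with
  | _ p => exact p.2.2

noncomputable def pt (y : ℕ → Bool) (u : ℝ) : CantorFanSpace :=
  q (y, Set.projIcc 0 1 zero_le_one u)

lemma pt_continuous (y : ℕ → Bool) : Continuous (pt y) :=
  q_continuous.comp (continuous_const.prodMk continuous_projIcc)

lemma ht_pt {u : ℝ} (y : ℕ → Bool) (hu : u ∈ Set.Icc (0:ℝ) 1) : ht (pt y u) = u := by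
  simp only [pt, ht_q, Set.projIcc_of_mem zero_le_one hu]

lemma pt_zero (y : ℕ → Bool) : pt y 0 = vtop := by
  refine q_eq.mpr (Or.inr ⟨?_, rfl⟩)
  simp [Set.projIcc_of_mem zero_le_one (by norm_num : (0:ℝ) ∈ Set.Icc (0:ℝ) 1)]

lemma exists_pt (z : CantorFanSpace) : ∃ y u, u ∈ Set.Icc (0:ℝ) 1 ∧ z = pt y u := by
  induction z using Quotient.ind with
  | _ p =>
    refine ⟨p.1, (p.2:ℝ), p.2.2, ?_⟩
    show Quotient.mk _ p = q _
    simp only [pt, Set.projIcc_of_mem zero_le_one p.2.2]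
    rfl

lemma pt_inj {y y' : ℕ → Bool} {u u' : ℝ} (hu : u ∈ Set.Icc (0:ℝ) 1)
    (hu' : u' ∈ Set.Icc (0:ℝ) 1) (h : pt y u = pt y' u') : u = u' ∧ (u ≠ 0 → y = y') := by
  rcases q_eq.mp h with heq | ⟨h1, h2⟩
  · have h2 := congrArg (fun p : Fence => ((p.2 : Set.Icc (0:ℝ) 1) : ℝ)) heq
    have h1 := congrArg Prod.fst heq
    simp only [Set.projIcc_of_mem zero_le_one hu, Set.projIcc_of_mem zero_le_one hu'] at h2 h1
    exact ⟨h2, fun _ => h1⟩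
  · simp only [Set.projIcc_of_mem zero_le_one hu] at h1
    simp only [Set.projIcc_of_mem zero_le_one hu'] at h2
    exact ⟨by rw [h1, h2], fun hc => absurd h1 hc⟩

lemma pt_eq_vtop {y : ℕ → Bool} {u : ℝ} (hu : u ∈ Set.Icc (0:ℝ) 1) :
    pt y u = vtop ↔ u = 0 := by
  constructor
  · intro h
    rw [← pt_zero y] at h
    exact (pt_inj hu (by norm_num) h).1
  · rintro rfl; exact pt_zero y

lemma ht_vtop : ht vtop = 0 := rfl

instance : CompactSpace CantorFanSpace := Quotient.compactSpace

noncomputable def gEmb : CantorFanSpace → ℝ × (ℕ → ℝ) :=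
  Quotient.lift (fun p : Fence => ((p.2:ℝ), fun n => (p.2:ℝ) * (if p.1 n then 1 else 0)))
    (by
      rintro a b (rfl | ⟨h1, h2⟩)
      · rfl
      · simp [h1, h2])

lemma gEmb_continuous : Continuous gEmb := by
  refine Continuous.quotient_lift ?_ _
  refine Continuous.prodMk (continuous_subtype_val.comp continuous_snd) ?_
  refine continuous_pi fun n => Continuous.mul (continuous_subtype_val.comp continuous_snd) ?_
  exact (continuous_of_discreteTopology (f := fun b : Bool => if b then (1:ℝ) else 0)).comp
    ((continuous_apply n).comp continuous_fst)

lemma gEmb_inj : Function.Injective gEmb := by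
  intro a b
  induction a using Quotient.ind with
  | _ p =>
    induction b using Quotient.ind with
    | _ p' =>
      intro h
      have h1 : (p.2:ℝ) = (p'.2:ℝ) := congrArg Prod.fst h
      by_cases h0 : (p.2:ℝ) = 0
      · exact Quotient.sound (Or.inr ⟨h0, by rw [← h1]; exact h0⟩)
      · refine Quotient.sound (Or.inl ?_)
        have h2 : (fun n => (p.2:ℝ) * (if p.1 n then (1:ℝ) else 0)) =
            (fun n => (p'.2:ℝ) * (if p'.1 n then (1:ℝ) else 0)) := congrArg Prod.snd h
        have hy : p.1 = p'.1 := by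
          funext n
          have h3 : (p.2:ℝ) * (if p.1 n then (1:ℝ) else 0) =
              (p'.2:ℝ) * (if p'.1 n then (1:ℝ) else 0) := congrFun h2 n
          rw [← h1] at h3
          have h4 := mul_left_cancel₀ h0 h3
          rcases Bool.eq_false_or_eq_true (p.1 n) with hb | hb <;>
            rcases Bool.eq_false_or_eq_true (p'.1 n) with hb' | hb' <;>
              simp_all
        exact Prod.ext hy (Subtype.ext h1)

instance inst_s18 : T2Space CantorFanSpace :=
  (gEmb_continuous.isClosedEmbedding gEmb_inj).toIsEmbedding.t2Space

end Stmt18Aux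
section Stmt18Aux2

open Set Filter Topology

lemma spoke_eq {Z : Set CantorFanSpace} (hZ : IsPreconnected Z)
    {y₁ y₂ : ℕ → Bool} {u₁ u₂ : ℝ} (h₁m : u₁ ∈ Set.Icc (0:ℝ) 1) (h₂m : u₂ ∈ Set.Icc (0:ℝ) 1)
    (h₁ : pt y₁ u₁ ∈ Z) (h₂ : pt y₂ u₂ ∈ Z) (hu₁ : u₁ ≠ 0) (hu₂ : u₂ ≠ 0)
    (hv : vtop ∉ Z) : y₁ = y₂ := by
  by_contra hne
  obtain ⟨n, hn⟩ : ∃ n, y₁ n ≠ y₂ n := by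
    by_contra hc
    push_neg at hc
    exact hne (funext hc)
  have hpre : ∀ b : Bool,
      IsOpen {z : CantorFanSpace |
        ∃ y u, (y n = y₁ n ↔ b = true) ∧ u ∈ Set.Icc (0:ℝ) 1 ∧ u ≠ 0 ∧ z = pt y u} := by
    intro b
    set S := {z : CantorFanSpace |
        ∃ y u, (y n = y₁ n ↔ b = true) ∧ u ∈ Set.Icc (0:ℝ) 1 ∧ u ≠ 0 ∧ z = pt y u} with hS
    have hq : q ⁻¹' S = {p : Fence | (p.1 n = y₁ n ↔ b = true) ∧ (p.2:ℝ) ≠ 0} := by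
      ext p
      simp only [Set.mem_preimage, hS, Set.mem_setOf_eq]
      constructor
      · rintro ⟨y, u, hy, hum, hu0, hqe⟩
        have hp : p = (y, Set.projIcc 0 1 zero_le_one u) := by
          rcases q_eq.mp hqe with h | ⟨_, h2⟩
          · exact h
          · exact absurd (by simpa [Set.projIcc_of_mem zero_le_one hum] using h2) hu0
        rw [hp]
        simp only [Set.projIcc_of_mem zero_le_one hum]
        exact ⟨hy, hu0⟩
      · rintro ⟨hy, h0⟩
        refine ⟨p.1, (p.2:ℝ), hy, p.2.2, h0, ?_⟩
        simp only [pt, Set.projIcc_of_mem zero_le_one p.2.2]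
    have hopen : IsOpen (q ⁻¹' S) := by
      rw [hq]
      have c1 : Continuous (fun p : Fence => p.1 n) := (continuous_apply n).comp continuous_fst
      have o1 : IsOpen {p : Fence | p.1 n = y₁ n ↔ b = true} :=
        (isOpen_discrete {c : Bool | c = y₁ n ↔ b = true}).preimage c1
      have c2 : Continuous (fun p : Fence => (p.2:ℝ)) := continuous_subtype_val.comp continuous_snd
      have o2 : IsOpen {p : Fence | (p.2:ℝ) ≠ 0} := isOpen_compl_singleton.preimage c2
      exact o1.and o2
    exact (isQuotientMap_quot_mk (r := (coneSetoid (ℕ → Bool)).r)).isOpen_preimage.mp hopen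
  have hcover : Z ⊆ {z : CantorFanSpace |
        ∃ y u, (y n = y₁ n ↔ true = true) ∧ u ∈ Set.Icc (0:ℝ) 1 ∧ u ≠ 0 ∧ z = pt y u} ∪
      {z : CantorFanSpace |
        ∃ y u, (y n = y₁ n ↔ false = true) ∧ u ∈ Set.Icc (0:ℝ) 1 ∧ u ≠ 0 ∧ z = pt y u} := by
    intro z hz
    obtain ⟨y, u, hum, rfl⟩ := exists_pt z
    have hu0 : u ≠ 0 := fun h => hv (by rw [h, pt_zero] at hz; exact hz)
    by_cases hy : y n = y₁ n
    · exact Or.inl ⟨y, u, by simp [hy], hum, hu0, rfl⟩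
    · exact Or.inr ⟨y, u, by simp [hy], hum, hu0, rfl⟩
  obtain ⟨z, hzZ, hzV, hzW⟩ := hZ _ _ (hpre true) (hpre false) hcover
    ⟨pt y₁ u₁, h₁, ⟨y₁, u₁, by simp, h₁m, hu₁, rfl⟩⟩
    ⟨pt y₂ u₂, h₂, ⟨y₂, u₂, by simpa using Ne.symm hn, h₂m, hu₂, rfl⟩⟩
  obtain ⟨y, u, hy, hum, hu0, rfl⟩ := hzV
  obtain ⟨y', u', hy', hum', hu0', heq⟩ := hzW
  rw [(pt_inj hum hum' heq).2 hu0] at hy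
  simp at hy hy'
  exact hy' hy

noncomputable def arcMap {X : Type*} [TopologicalSpace X] {A : Set X}
    (φ : (Set.Icc (0:ℝ) 1) ≃ₜ A) (u : ℝ) : X := (φ (Set.projIcc 0 1 zero_le_one u) : A)

section ArcMap

open Set Filter Topology

variable {X : Type*} [TopologicalSpace X] {A : Set X} (φ : (Set.Icc (0:ℝ) 1) ≃ₜ A)

lemma arcMap_continuous : Continuous (arcMap φ) :=
  continuous_subtype_val.comp (φ.continuous.comp continuous_projIcc)

lemma arcMap_mem (u : ℝ) : arcMap φ u ∈ A := (φ _).2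

lemma arcMap_eq {u : ℝ} (hu : u ∈ Set.Icc (0:ℝ) 1) : arcMap φ u = (φ ⟨u, hu⟩ : A) := by
  simp only [arcMap, Set.projIcc_of_mem zero_le_one hu]

lemma arcMap_injOn : Set.InjOn (arcMap φ) (Set.Icc (0:ℝ) 1) := by
  intro u hu u' hu' h
  rw [arcMap_eq φ hu, arcMap_eq φ hu'] at h
  have := φ.injective (Subtype.coe_injective h)
  exact congrArg Subtype.val this

lemma arcMap_surjOn : A ⊆ arcMap φ '' (Set.Icc (0:ℝ) 1) := by
  intro a ha
  refine ⟨(φ.symm ⟨a, ha⟩ : Set.Icc (0:ℝ) 1), (φ.symm ⟨a, ha⟩).2, ?_⟩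
  rw [arcMap_eq φ (φ.symm ⟨a, ha⟩).2]
  simp

lemma arcMap_image_subset (s : Set ℝ) : arcMap φ '' s ⊆ A := by
  rintro x ⟨u, _, rfl⟩; exact arcMap_mem φ u

lemma arcMap_image_preconnected {s : Set ℝ} (hs : IsPreconnected s) :
    IsPreconnected (arcMap φ '' s) :=
  hs.image _ (arcMap_continuous φ).continuousOn

end ArcMap

noncomputable def iccFlip : (Set.Icc (0:ℝ) 1) ≃ₜ (Set.Icc (0:ℝ) 1) where
  toFun t := ⟨1 - t, ⟨by linarith [t.2.2], by linarith [t.2.1]⟩⟩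
  invFun t := ⟨1 - t, ⟨by linarith [t.2.2], by linarith [t.2.1]⟩⟩
  left_inv t := by ext; simp
  right_inv t := by ext; simp
  continuous_toFun := Continuous.subtype_mk (continuous_const.sub continuous_subtype_val) _
  continuous_invFun := Continuous.subtype_mk (continuous_const.sub continuous_subtype_val) _

section EndpointChar

open Set Filter Topology

variable {X : Type*} [TopologicalSpace X]

lemma isEndpointOfArc_of_cases {D : Set X} (hD : IsArc D) {x : X} (hx : x ∈ D)
    (H : ∀ φ : (Set.Icc (0:ℝ) 1) ≃ₜ D,
      arcMap φ 0 ≠ x → arcMap φ 1 ≠ x → False) :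
    IsEndpointOfArc D x := by
  obtain ⟨ψ⟩ := hD
  set φ := ψ.symm with hφ
  by_cases h0 : arcMap φ 0 = x
  · refine ⟨φ, ?_⟩
    rw [← h0, arcMap_eq φ (by norm_num : (0:ℝ) ∈ Set.Icc (0:ℝ) 1)]
  · by_cases h1 : arcMap φ 1 = x
    · refine ⟨iccFlip.trans φ, ?_⟩
      have hflip : iccFlip ⟨0, by norm_num⟩ = (⟨1, by norm_num⟩ : Set.Icc (0:ℝ) 1) := by
        apply Subtype.ext
        show (1:ℝ) - ↑(⟨0, by norm_num⟩ : Set.Icc (0:ℝ) 1) = 1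
        norm_num
      show ((φ (iccFlip ⟨0, by norm_num⟩) : D) : X) = x
      rw [hflip, ← arcMap_eq φ (by norm_num : (1:ℝ) ∈ Set.Icc (0:ℝ) 1), h1]
    · exact absurd (H φ h0 h1) not_false
end EndpointChar

section Reach

open Set Filter Topology

/-- In a set `J` whose trace on the spoke `y₀` has maximal height `s`, any preconnected
subset `P ⊆ J` avoiding the top, containing the tip `pt y₀ s` and a second point,
contains a whole final segment of the spoke. -/
lemma reach {J : Set CantorFanSpace} {y₀ : ℕ → Bool} {s : ℝ}
    (hs0 : 0 < s) (hs1 : s ≤ 1)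
    (hbd : ∀ u, u ∈ Set.Icc (0:ℝ) 1 → pt y₀ u ∈ J → u ≤ s)
    {P : Set CantorFanSpace} (hPJ : P ⊆ J) (hPc : IsPreconnected P)
    (hvP : vtop ∉ P) (heP : pt y₀ s ∈ P) {z : CantorFanSpace} (hz : z ∈ P)
    (hze : z ≠ pt y₀ s) :
    ∃ h, 0 < h ∧ h < s ∧ ∀ u, h ≤ u → u ≤ s → pt y₀ u ∈ P := by
  have hsm : s ∈ Set.Icc (0:ℝ) 1 := ⟨le_of_lt hs0, hs1⟩
  obtain ⟨yz, uz, huzm, rfl⟩ := exists_pt z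
  have huz0 : uz ≠ 0 := fun h => hvP (by rw [h, pt_zero] at hz; exact hz)
  have hyz : yz = y₀ := spoke_eq hPc huzm hsm hz heP huz0 (ne_of_gt hs0) hvP
  rw [hyz] at hz hze
  have huzs : uz ≤ s := hbd uz huzm (hPJ hz)
  have huzlt : uz < s := lt_of_le_of_ne huzs (fun h => hze (by rw [h]))
  refine ⟨uz, lt_of_le_of_ne huzm.1 (Ne.symm huz0), huzlt, ?_⟩
  intro u huu hus
  have hE : IsPreconnected (ht '' P) := hPc.image ht ht_continuous.continuousOn
  have h1 : uz ∈ ht '' P := ⟨_, hz, ht_pt y₀ huzm⟩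
  have h2 : s ∈ ht '' P := ⟨_, heP, ht_pt y₀ hsm⟩
  have : u ∈ ht '' P := hE.Icc_subset h1 h2 ⟨huu, hus⟩
  obtain ⟨w, hwP, hwu⟩ := this
  obtain ⟨yw, uw, huwm, rfl⟩ := exists_pt w
  rw [ht_pt yw huwm] at hwu
  subst hwu
  have huw0 : uw ≠ 0 := by
    intro h
    exact (lt_irrefl (0:ℝ)) (lt_of_lt_of_le (lt_of_lt_of_le (lt_of_le_of_ne huzm.1
      (Ne.symm huz0)) huu) (le_of_eq h))
  have : yw = y₀ := spoke_eq hPc huwm hsm hwP heP huw0 (ne_of_gt hs0) hvP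
  rwa [this] at hwP

end Reach

section EndpointMax

open Set Filter Topology

lemma endpoint_max {J : Set CantorFanSpace} {y₀ : ℕ → Bool} {s : ℝ}
    (hs0 : 0 < s) (hs1 : s ≤ 1)
    (hbd : ∀ u, u ∈ Set.Icc (0:ℝ) 1 → pt y₀ u ∈ J → u ≤ s)
    {D : Set CantorFanSpace} (hDJ : D ⊆ J) (hDarc : IsArc D) (heD : pt y₀ s ∈ D) :
    IsEndpointOfArc D (pt y₀ s) := by
  have hsm : s ∈ Set.Icc (0:ℝ) 1 := ⟨hs0.le, hs1⟩
  refine isEndpointOfArc_of_cases hDarc heD ?_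
  intro φ h0 h1
  set ρ := arcMap φ with hρ
  obtain ⟨c, hcm, hc⟩ : ∃ c ∈ Set.Icc (0:ℝ) 1, ρ c = pt y₀ s := by
    obtain ⟨c, hcm, hcc⟩ := arcMap_surjOn φ heD
    exact ⟨c, hcm, hcc⟩
  have hc0 : c ≠ 0 := fun h => h0 (by rw [← h]; exact hc)
  have hc1 : c ≠ 1 := fun h => h1 (by rw [← h]; exact hc)
  have hc0' : 0 < c := lt_of_le_of_ne hcm.1 (Ne.symm hc0)
  have hc1' : c < 1 := lt_of_le_of_ne hcm.2 hc1
  have he'v : pt y₀ s ≠ vtop := by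
    rw [Ne, pt_eq_vtop hsm]
    exact ne_of_gt hs0
  have prep : ∀ T : Set ℝ, T ⊆ Set.Icc (0:ℝ) 1 → IsPreconnected T → c ∈ T →
      (∃ d ∈ T, d ≠ c) →
      ∃ P, P ⊆ ρ '' T ∧ IsPreconnected P ∧ vtop ∉ P ∧ pt y₀ s ∈ P ∧
        ∃ z ∈ P, z ≠ pt y₀ s := by
    rintro T hTm hTc hcT ⟨d, hdT, hdc⟩
    by_cases hvT : ∃ u ∈ T, ρ u = vtop
    · obtain ⟨uv, huvT, huvv⟩ := hvT
      have huvc : uv ≠ c := fun h => he'v (by rw [← hc, ← h]; exact huvv)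
      have key : ∀ T' : Set ℝ, IsPreconnected T' → T' ⊆ T → c ∈ T' → uv ∉ T' →
          (∃ m ∈ T', m ≠ c) →
          ∃ P, P ⊆ ρ '' T ∧ IsPreconnected P ∧ vtop ∉ P ∧ pt y₀ s ∈ P ∧
            ∃ z ∈ P, z ≠ pt y₀ s := by
        rintro T' hT'c hT'T hcT' huvT' ⟨m, hmT', hmc⟩
        refine ⟨ρ '' T', Set.image_mono hT'T, arcMap_image_preconnected φ hT'c, ?_,
          ⟨c, hcT', hc⟩, ⟨ρ m, ⟨m, hmT', rfl⟩, ?_⟩⟩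
        · rintro ⟨u, huT', hu⟩
          have : u = uv := arcMap_injOn φ (hTm (hT'T huT')) (hTm huvT) (by show ρ u = ρ uv; rw [hu, huvv])
          exact huvT' (this ▸ huT')
        · intro h
          exact hmc (arcMap_injOn φ (hTm (hT'T hmT')) (hTm hcT) (by show ρ _ = ρ _; rw [h, hc]))
      rcases lt_or_gt_of_ne huvc with hlt | hgt
      · refine key (Set.Ioc uv c) isPreconnected_Ioc
          (fun x hx => hTc.Icc_subset huvT hcT ⟨hx.1.le, hx.2⟩) ⟨hlt, le_rfl⟩
          (fun h => lt_irrefl uv h.1) ⟨(uv + c)/2, ⟨by linarith, by linarith⟩, by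
            intro h; linarith⟩
      · refine key (Set.Ico c uv) isPreconnected_Ico
          (fun x hx => hTc.Icc_subset hcT huvT ⟨hx.1, hx.2.le⟩) ⟨le_rfl, hgt⟩
          (fun h => lt_irrefl uv h.2) ⟨(c + uv)/2, ⟨by linarith, by linarith⟩, by
            intro h; linarith⟩
    · push_neg at hvT
      refine ⟨ρ '' T, subset_rfl, arcMap_image_preconnected φ hTc, ?_,
        ⟨c, hcT, hc⟩, ⟨ρ d, ⟨d, hdT, rfl⟩, ?_⟩⟩
      · rintro ⟨u, huT, hu⟩
        exact hvT u huT hu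
      · intro h
        exact hdc (arcMap_injOn φ (hTm hdT) (hTm hcT) (by show ρ _ = ρ _; rw [h, hc]))
  obtain ⟨P₁, hP₁T, hP₁c, hP₁v, hP₁e, z₁, hz₁P, hz₁e⟩ :=
    prep (Set.Icc 0 c) (Set.Icc_subset_Icc le_rfl hcm.2) isPreconnected_Icc
      ⟨hcm.1, le_rfl⟩ ⟨0, ⟨le_rfl, hcm.1⟩, Ne.symm hc0⟩
  obtain ⟨P₂, hP₂T, hP₂c, hP₂v, hP₂e, z₂, hz₂P, hz₂e⟩ :=
    prep (Set.Icc c 1) (Set.Icc_subset_Icc hcm.1 le_rfl) isPreconnected_Icc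
      ⟨le_rfl, hcm.2⟩ ⟨1, ⟨hcm.2, le_rfl⟩, fun h => hc1 h.symm⟩
  have hP₁J : P₁ ⊆ J := fun x hx => hDJ (arcMap_image_subset φ _ (hP₁T hx))
  have hP₂J : P₂ ⊆ J := fun x hx => hDJ (arcMap_image_subset φ _ (hP₂T hx))
  obtain ⟨h₁, hh₁0, hh₁s, hseg₁⟩ := reach hs0 hs1 hbd hP₁J hP₁c hP₁v hP₁e hz₁P hz₁e
  obtain ⟨h₂, hh₂0, hh₂s, hseg₂⟩ := reach hs0 hs1 hbd hP₂J hP₂c hP₂v hP₂e hz₂P hz₂e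
  set u := (max h₁ h₂ + s)/2 with hu
  have hmaxlt : max h₁ h₂ < s := max_lt hh₁s hh₂s
  have hus : u < s := by
    rw [hu]; linarith [le_max_left h₁ h₂]
  have hu1 : h₁ ≤ u := by
    have := le_max_left h₁ h₂; rw [hu]; linarith
  have hu2 : h₂ ≤ u := by
    have := le_max_right h₁ h₂; rw [hu]; linarith
  have hu0 : 0 < u := lt_of_lt_of_le hh₁0 hu1
  have hum : u ∈ Set.Icc (0:ℝ) 1 := ⟨hu0.le, le_trans hus.le hs1⟩
  obtain ⟨w₁, hw₁, hρw₁⟩ := hP₁T (hseg₁ u hu1 hus.le)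
  obtain ⟨w₂, hw₂, hρw₂⟩ := hP₂T (hseg₂ u hu2 hus.le)
  have hw₁m : w₁ ∈ Set.Icc (0:ℝ) 1 := ⟨hw₁.1, le_trans hw₁.2 hcm.2⟩
  have hw₂m : w₂ ∈ Set.Icc (0:ℝ) 1 := ⟨le_trans hcm.1 hw₂.1, hw₂.2⟩
  have hw12 : w₁ = w₂ := arcMap_injOn φ hw₁m hw₂m (by show ρ w₁ = ρ w₂; rw [hρw₁, hρw₂])
  have hwc : w₁ = c := le_antisymm hw₁.2 (hw12 ▸ hw₂.1)
  have : pt y₀ u = pt y₀ s := by rw [← hρw₁, hwc, hc]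
  have := (pt_inj hum hsm this).1
  exact absurd this (ne_of_lt hus)

end EndpointMax

section Seg

open Set Filter Topology

lemma seg_subset {J : Set CantorFanSpace} (hJarc : IsArcwiseConnected J) (hvJ : vtop ∈ J)
    {y₀ : ℕ → Bool} {s : ℝ} (hs0 : 0 < s) (hs1 : s ≤ 1) (he'J : pt y₀ s ∈ J) :
    ∀ u, 0 ≤ u → u ≤ s → pt y₀ u ∈ J := by
  have hsm : s ∈ Set.Icc (0:ℝ) 1 := ⟨hs0.le, hs1⟩
  have hne : vtop ≠ pt y₀ s := by
    intro h
    have := (pt_eq_vtop hsm).mp h.symm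
    exact (ne_of_gt hs0) this
  obtain ⟨Z, hZJ, hZarc, hZv, hZe⟩ := hJarc vtop hvJ (pt y₀ s) he'J hne
  obtain ⟨φZ, hφ0⟩ := hZv
  set ρZ := arcMap φZ with hρZ
  have hρ0 : ρZ 0 = vtop := by
    rw [hρZ, arcMap_eq φZ (by norm_num : (0:ℝ) ∈ Set.Icc (0:ℝ) 1)]
    exact hφ0
  have heZ : pt y₀ s ∈ Z := by
    obtain ⟨φe, he⟩ := hZe
    rw [← he]
    exact (φe _).2
  obtain ⟨ce, hcem, hce⟩ : ∃ ce ∈ Set.Icc (0:ℝ) 1, ρZ ce = pt y₀ s := by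
    obtain ⟨ce, h1, h2⟩ := arcMap_surjOn φZ heZ
    exact ⟨ce, h1, h2⟩
  have hce0 : 0 < ce := by
    rcases lt_or_eq_of_le hcem.1 with h | h
    · exact h
    · exact absurd (by rw [← h] at hce; rw [← hce, hρ0]) hne
  set P := ρZ '' Set.Ioc 0 ce with hP
  have hPm : Set.Ioc (0:ℝ) ce ⊆ Set.Icc (0:ℝ) 1 := fun x hx => ⟨hx.1.le, le_trans hx.2 hcem.2⟩
  have hPJ : P ⊆ J := fun x hx => hZJ (arcMap_image_subset φZ _ hx)
  have hPc : IsPreconnected P := arcMap_image_preconnected φZ isPreconnected_Ioc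
  have hPv : vtop ∉ P := by
    rintro ⟨w, hw, hwv⟩
    have : w = 0 := arcMap_injOn φZ (hPm hw) (by norm_num) (by show ρZ w = ρZ 0; rw [hwv, hρ0])
    rw [this] at hw
    exact lt_irrefl 0 hw.1
  have hPe : pt y₀ s ∈ P := ⟨ce, ⟨hce0, le_rfl⟩, hce⟩
  intro u hu0 hus
  rcases eq_or_lt_of_le hu0 with h | hu0'
  · rw [← h, pt_zero]
    exact hvJ
  -- find a point of small height in P
  have hcont : Filter.Tendsto (fun w => ht (ρZ w)) (nhds 0) (nhds 0) := by
    have h := (ht_continuous.comp (arcMap_continuous φZ)).tendsto 0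
    have h0 : (ht ∘ arcMap φZ) 0 = 0 := by
      show ht (ρZ 0) = 0
      rw [hρ0]
      rfl
    rw [h0] at h
    exact h
  have hev1 : ∀ᶠ w in nhdsWithin 0 (Set.Ioi (0:ℝ)), ht (ρZ w) < u :=
    eventually_nhdsWithin_of_eventually_nhds (hcont.eventually_lt_const hu0')
  have hev2 : ∀ᶠ w in nhdsWithin 0 (Set.Ioi (0:ℝ)), w < ce :=
    eventually_nhdsWithin_of_eventually_nhds (Filter.tendsto_id.eventually_lt_const hce0)
  have hev3 : ∀ᶠ w in nhdsWithin 0 (Set.Ioi (0:ℝ)), 0 < w :=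
    eventually_mem_nhdsWithin
  obtain ⟨w, hw1, hw2, hw3⟩ := (hev1.and (hev2.and hev3)).exists
  have hwP : ρZ w ∈ P := ⟨w, ⟨hw3, hw2.le⟩, rfl⟩
  have hE : IsPreconnected (ht '' P) := hPc.image ht ht_continuous.continuousOn
  have h1 : ht (ρZ w) ∈ ht '' P := ⟨_, hwP, rfl⟩
  have h2 : s ∈ ht '' P := ⟨_, hPe, ht_pt y₀ hsm⟩
  have humem : u ∈ ht '' P := hE.Icc_subset h1 h2 ⟨hw1.le, hus⟩
  obtain ⟨z, hzP, hzu⟩ := humem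
  obtain ⟨yz, uz, huzm, rfl⟩ := exists_pt z
  rw [ht_pt yz huzm] at hzu
  subst hzu
  have huz0 : uz ≠ 0 := ne_of_gt hu0'
  have : yz = y₀ := spoke_eq hPc huzm hsm hzP hPe huz0 (ne_of_gt hs0) hPv
  rw [this] at hzP
  exact hPJ hzP

lemma seg_isArcFromTo {y₀ : ℕ → Bool} {s : ℝ} (hs0 : 0 < s) (hs1 : s ≤ 1) :
    IsArcFromTo (pt y₀ '' Set.Icc 0 s) vtop (pt y₀ s) := by
  have hsm : s ∈ Set.Icc (0:ℝ) 1 := ⟨hs0.le, hs1⟩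
  set ξ : (Set.Icc (0:ℝ) 1) → CantorFanSpace := fun t => pt y₀ (s * t) with hξ
  have hmem : ∀ t : Set.Icc (0:ℝ) 1, s * (t:ℝ) ∈ Set.Icc (0:ℝ) 1 := fun t =>
    ⟨mul_nonneg hs0.le t.2.1, le_trans (by nlinarith [t.2.2, t.2.1]) hs1⟩
  have hcont : Continuous ξ := (pt_continuous y₀).comp (continuous_const.mul continuous_subtype_val)
  have hinj : Function.Injective ξ := by
    intro t t' h
    have := (pt_inj (hmem t) (hmem t') h).1
    exact Subtype.ext (mul_left_cancel₀ (ne_of_gt hs0) this)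
  have hrange : Set.range ξ = pt y₀ '' Set.Icc 0 s := by
    ext z
    constructor
    · rintro ⟨t, rfl⟩
      exact ⟨s * t, ⟨mul_nonneg hs0.le t.2.1, by nlinarith [t.2.2]⟩, rfl⟩
    · rintro ⟨w, hw, rfl⟩
      refine ⟨⟨w / s, div_nonneg hw.1 hs0.le, by
        rw [div_le_one hs0]; exact hw.2⟩, ?_⟩
      show pt y₀ (s * (w / s)) = pt y₀ w
      rw [mul_div_cancel₀ w (ne_of_gt hs0)]
  have hemb := (hcont.isClosedEmbedding hinj).toIsEmbedding
  set φSeg := (Topology.IsEmbedding.toHomeomorph hemb).trans (Homeomorph.setCongr hrange) with hφSeg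
  have hval : ∀ t, ((φSeg t : pt y₀ '' Set.Icc 0 s) : CantorFanSpace) = ξ t := fun t => rfl
  have hne : vtop ≠ pt y₀ s := by
    intro h
    exact (ne_of_gt hs0) ((pt_eq_vtop hsm).mp h.symm)
  refine Or.inr ⟨hne, ⟨φSeg.symm⟩, ⟨φSeg, ?_⟩, ⟨iccFlip.trans φSeg, ?_⟩⟩
  · rw [hval]
    show pt y₀ (s * ((⟨0, by norm_num⟩ : Set.Icc (0:ℝ) 1) : ℝ)) = vtop
    rw [show s * ((⟨0, by norm_num⟩ : Set.Icc (0:ℝ) 1) : ℝ) = 0 by norm_num]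
    exact pt_zero y₀
  · show ((φSeg (iccFlip ⟨0, by norm_num⟩) : pt y₀ '' Set.Icc 0 s) : CantorFanSpace) = pt y₀ s
    rw [hval]
    show pt y₀ (s * ((iccFlip ⟨0, by norm_num⟩ : Set.Icc (0:ℝ) 1) : ℝ)) = pt y₀ s
    have : ((iccFlip ⟨0, by norm_num⟩ : Set.Icc (0:ℝ) 1) : ℝ) = 1 := by
      show (1:ℝ) - ↑(⟨0, by norm_num⟩ : Set.Icc (0:ℝ) 1) = 1
      norm_num
    rw [this, mul_one]

end Seg

/-- if a retraction `r : J → K` between fans in the Cantor fan lifts to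
a retraction `R : H_J → H_K` of the fences (`q ∘ R = r ∘ q` on `H_J`), then `r` is
semi-simple: each leg of `J` is mapped into a single leg of `J`. -/
theorem stmt18 (J K : Set CantorFanSpace)
    (hJ : IsFanWithTop J vtop) (hK : IsFanWithTop K vtop) (hKJ : K ⊆ J)
    (r : CantorFanSpace → CantorFanSpace)
    (hr : ContinuousOn r J) (hm : Set.MapsTo r J K) (hid : Set.EqOn r id K)
    (R : Fence → Fence) (hR : ContinuousOn R (HFence J))
    (hRm : Set.MapsTo R (HFence J) (HFence K)) (hRid : Set.EqOn R id (HFence K))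
    (hcomm : ∀ x ∈ HFence J, q (R x) = r (q x)) :
    ∀ A ∈ Legs J vtop, ∃ B ∈ Legs J vtop, r '' A ⊆ B := by
  intro A hA
  obtain ⟨e, hEnd, hAJ, hAft⟩ := hA
  have hvK : vtop ∈ K := hK.2.1
  have hrv : r vtop = vtop := hid hvK
  have hvJ : vtop ∈ J := hJ.2.1
  rcases hAft with ⟨hveq, hAv⟩ | ⟨hne, hAarc, hAv, hAe⟩
  · refine ⟨A, ⟨e, hEnd, hAJ, Or.inl ⟨hveq, hAv⟩⟩, ?_⟩
    rw [hAv, Set.image_singleton, hrv]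
  · obtain ⟨φA, hφA0⟩ := hAv
    set ρA := arcMap φA with hρA
    have hρA0 : ρA 0 = vtop := by
      rw [hρA, arcMap_eq φA (by norm_num : (0:ℝ) ∈ Set.Icc (0:ℝ) 1)]
      exact hφA0
    set Acore := ρA '' Set.Ioc 0 1 with hAcoredef
    have hioc : Set.Ioc (0:ℝ) 1 ⊆ Set.Icc (0:ℝ) 1 := fun x hx => ⟨hx.1.le, hx.2⟩
    have hAcoreA : Acore ⊆ A := arcMap_image_subset φA _
    have hAcoreJ : Acore ⊆ J := fun x hx => hAJ (hAcoreA hx)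
    have hAcorev : vtop ∉ Acore := by
      rintro ⟨w, hw, hwv⟩
      have hw0 : w = 0 := arcMap_injOn φA (hioc hw) (by norm_num)
        (by show ρA w = ρA 0; rw [hwv, hρA0])
      rw [hw0] at hw
      exact lt_irrefl 0 hw.1
    have hav : ∀ a ∈ Acore, a ≠ vtop := fun a ha h => hAcorev (h ▸ ha)
    have hAcover : ∀ a ∈ A, a ≠ vtop → a ∈ Acore := by
      intro a ha hav'
      obtain ⟨w, hwm, hwa⟩ := arcMap_surjOn φA ha
      refine ⟨w, ⟨?_, hwm.2⟩, hwa⟩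
      rcases lt_or_eq_of_le hwm.1 with h | h
      · exact h
      · exact absurd (by rw [← hwa, ← h]; exact hρA0) hav'
    have hAcorec : IsPreconnected Acore := arcMap_image_preconnected φA isPreconnected_Ioc
    have h1core : ρA 1 ∈ Acore := ⟨1, ⟨one_pos, le_rfl⟩, rfl⟩
    obtain ⟨y₁, u₁, hu₁m, ha₀⟩ := exists_pt (ρA 1)
    have hu₁0 : u₁ ≠ 0 := by
      intro h
      exact hav _ h1core (by rw [ha₀, h, pt_zero])
    have hAc_spoke : ∀ a ∈ Acore, ht a ∈ Set.Icc (0:ℝ) 1 ∧ ht a ≠ 0 ∧ a = pt y₁ (ht a) := by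
      intro a ha
      obtain ⟨ya, ua, huam, rfl⟩ := exists_pt a
      have hua0 : ua ≠ 0 := by
        intro h
        exact hav _ ha (by rw [h, pt_zero])
      have hya : ya = y₁ := spoke_eq hAcorec huam hu₁m ha (ha₀ ▸ h1core) hua0 hu₁0 hAcorev
      rw [ht_pt ya huam, hya]
      exact ⟨huam, hua0, rfl⟩
    set mm : CantorFanSpace → Fence :=
      fun z => ((y₁, Set.projIcc 0 1 zero_le_one (ht z)) : Fence) with hmm
    have hmcont : Continuous mm :=
      continuous_const.prodMk (continuous_projIcc.comp ht_continuous)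
    have hqm : ∀ a ∈ Acore, q (mm a) = a := by
      intro a ha
      show pt y₁ (ht a) = a
      exact ((hAc_spoke a ha).2.2).symm
    have hmH : ∀ a ∈ Acore, mm a ∈ HFence J := by
      intro a ha
      apply subset_closure
      show q (mm a) ∈ J \ {vtop}
      rw [hqm a ha]
      exact ⟨hAcoreJ ha, hav a ha⟩
    set L := mm '' Acore with hL
    have hLc : IsPreconnected L := hAcorec.image mm hmcont.continuousOn
    have hLH : L ⊆ HFence J := by
      rintro _ ⟨a, ha, rfl⟩
      exact hmH a ha
    set S := R '' L with hS
    have hSc : IsPreconnected S := hLc.image R (hR.mono hLH)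
    have hfstc : IsPreconnected (Prod.fst '' S) := hSc.image _ continuous_fst.continuousOn
    have hsub : (Prod.fst '' S).Subsingleton := hfstc.subsingleton
    set y₀ := (R (mm (ρA 1))).1 with hy₀def
    have hy₀ : ∀ a ∈ Acore, (R (mm a)).1 = y₀ :=
      fun a ha => hsub ⟨R (mm a), ⟨mm a, ⟨a, ha, rfl⟩, rfl⟩, rfl⟩
        ⟨R (mm (ρA 1)), ⟨mm (ρA 1), ⟨ρA 1, h1core, rfl⟩, rfl⟩, rfl⟩
    have hrA : ∀ a ∈ Acore, ∃ u, u ∈ Set.Icc (0:ℝ) 1 ∧ r a = pt y₀ u := by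
      intro a ha
      have h1 := hcomm (mm a) (hmH a ha)
      rw [hqm a ha] at h1
      refine ⟨((R (mm a)).2 : ℝ), (R (mm a)).2.2, ?_⟩
      rw [← h1]
      have h2 : R (mm a) = (y₀, (R (mm a)).2) := Prod.ext (hy₀ a ha) rfl
      rw [h2]
      show q _ = q _
      congr 1
      refine Prod.ext rfl ?_
      show (R (mm a)).2 = Set.projIcc 0 1 zero_le_one ((R (mm a)).2 : ℝ)
      rw [Set.projIcc_of_mem zero_le_one (R (mm a)).2.2]
    set M := J ∩ (pt y₀ '' Set.Icc 0 1) with hM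
    have hMcomp : IsCompact M :=
      (hJ.1.1.1.1).inter (isCompact_Icc.image (pt_continuous y₀))
    have hvM : vtop ∈ M := ⟨hvJ, ⟨0, ⟨le_rfl, zero_le_one⟩, pt_zero y₀⟩⟩
    obtain ⟨e', he'M, hmax⟩ := hMcomp.exists_isMaxOn ⟨vtop, hvM⟩ ht_continuous.continuousOn
    set s := ht e' with hsdef
    have hsm : s ∈ Set.Icc (0:ℝ) 1 := ht_mem e'
    obtain ⟨ue, huem, hue⟩ := he'M.2
    have hes : e' = pt y₀ s := by
      rw [hsdef, ← hue, ht_pt y₀ huem]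
    have hbd : ∀ u, u ∈ Set.Icc (0:ℝ) 1 → pt y₀ u ∈ J → u ≤ s := by
      intro u hum hu
      have h2 : ht (pt y₀ u) ≤ s := hmax (⟨hu, ⟨u, hum, rfl⟩⟩ : pt y₀ u ∈ M)
      rwa [ht_pt y₀ hum] at h2
    have hrAM : r '' A ⊆ M := by
      rintro _ ⟨a, ha, rfl⟩
      by_cases hav' : a = vtop
      · rw [hav', hrv]
        exact hvM
      · have hac := hAcover a ha hav'
        obtain ⟨u, hum, hru⟩ := hrA a hac
        exact ⟨hKJ (hm (hAJ ha)), ⟨u, hum, hru.symm⟩⟩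
    rcases lt_or_eq_of_le hsm.1 with hs0 | hs0
    · -- 0 < s : main case
      have he'J : pt y₀ s ∈ J := hes ▸ he'M.1
      have hsubJ := seg_subset hJ.1.1.2.1 hvJ hs0 hsm.2 he'J
      set Seg := pt y₀ '' Set.Icc 0 s with hSeg
      have hSegJ : Seg ⊆ J := by
        rintro _ ⟨u, hu, rfl⟩
        exact hsubJ u hu.1 hu.2
      have hSaft := seg_isArcFromTo (y₀ := y₀) hs0 hsm.2
      have hvne : vtop ≠ pt y₀ s := by
        intro h
        exact (ne_of_gt hs0) ((pt_eq_vtop hsm).mp h.symm)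
      have hEnd' : IsEndpoint J (pt y₀ s) :=
        ⟨he'J, fun D hDJ hDarc hD => endpoint_max hs0 hsm.2 hbd hDJ hDarc hD⟩
      refine ⟨Seg, ⟨pt y₀ s, hEnd', hSegJ, hSaft⟩, ?_⟩
      intro z hz
      obtain ⟨hzJ, u, hum, hzu⟩ := hrAM hz
      have hle : ht z ≤ s := hmax (hrAM hz)
      rw [← hzu, ht_pt y₀ hum] at hle
      exact ⟨u, ⟨hum.1, hle⟩, hzu⟩
    · -- s = 0 : image is {vtop} ⊆ A
      have hMtriv : ∀ z ∈ M, z = vtop := by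
        intro z hz
        have hle : ht z ≤ s := hmax hz
        obtain ⟨hzJ, u, hum, hzu⟩ := hz
        rw [← hzu, ht_pt y₀ hum, ← hs0] at hle
        have : u = 0 := le_antisymm hle hum.1
        rw [← hzu, this, pt_zero]
      have hvA : vtop ∈ A := by
        rw [← hρA0]
        exact arcMap_mem φA 0
      refine ⟨A, ⟨e, hEnd, hAJ, Or.inr ⟨hne, hAarc, ⟨φA, hφA0⟩, hAe⟩⟩, ?_⟩
      intro z hz
      rw [hMtriv z (hrAM hz)]
      exact hvA
end Stmt18Aux2
end
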